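/- arXiv:2012.00108 — 8 statements merged into one kernel-verified Lean document; each statement's English description precedes it below -/
import Mathlib

section
/- For any element a of the strictly upper triangular matrices ut_n(F_q), any x ∈ F_q, and any pair of indices 1 ≤ s < t ≤ n, the group commutator [1 + x·e_{s,t}, 1 + a] in UT_n(F_q) equals 1 + x · Σ_{r ≤ s, u ≥ t, (r,u) ≠ (s,t)} ((1+a)^{-1})_{r,s} · (1+a)_{t,u} · e_{r,u}, where the sum is over pairs (r,u) with r ≤ s, u ≥ t, and (r,u) strictly above (s,t) in the order r ≤ s < t ≤ u with (r,u) ≠ (s,t). -/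
open Matrix BigOperators

namespace Paper

variable (n : ℕ) (F : Type*) [Field F]

/-- The strictly upper triangular matrices `ut_n(F)`. -/
def utset : Set (Matrix (Fin n) (Fin n) F) :=
  {a | ∀ i j : Fin n, ¬ i < j → a i j = 0}

/-- The unipotent upper triangular group `UT_n(F)` (as a set of matrices). -/
def UTset : Set (Matrix (Fin n) (Fin n) F) :=
  {g | (∀ i j : Fin n, j < i → g i j = 0) ∧ ∀ i : Fin n, g i i = 1}

/-- `N` is a normal subgroup of the group `UT_n(F)`. -/
def IsNormalSubgroupUT (N : Set (Matrix (Fin n) (Fin n) F)) : Prop :=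
  N ⊆ UTset n F ∧ (1 : Matrix (Fin n) (Fin n) F) ∈ N ∧
    (∀ a ∈ N, ∀ b ∈ N, a * b ∈ N) ∧
    (∀ a ∈ N, ∃ b ∈ N, a * b = 1 ∧ b * a = 1) ∧
    (∀ g ∈ UTset n F, ∀ g' : Matrix (Fin n) (Fin n) F, g * g' = 1 → g' * g = 1 →
      ∀ a ∈ N, g * a * g' ∈ N)

/-- The order `(i,j) ⪯ (r,s)` iff `r ≤ i` and `j ≤ s` on edges. -/
def edgeLe (p q : Fin n × Fin n) : Prop := q.1 ≤ p.1 ∧ p.2 ≤ q.2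

/-- A set of increasing edges (a subset of `[[n]]`). -/
def IsEdgeSet (s : Set (Fin n × Fin n)) : Prop := ∀ p ∈ s, p.1 < p.2

/-- The upper set of `[[n]]` generated by `lam`. -/
def upGen (lam : Set (Fin n × Fin n)) : Set (Fin n × Fin n) :=
  {q | q.1 < q.2 ∧ ∃ p ∈ lam, edgeLe n p q}

/-- `↑^ℓ lam`: elements at least `ℓ` in height above some element of `lam`. -/
def upNum (lam : Set (Fin n × Fin n)) (l : ℕ) : Set (Fin n × Fin n) :=
  {q | q.1 < q.2 ∧ ∃ p ∈ lam, edgeLe n p q ∧ ((p.2 : ℕ) - (p.1 : ℕ)) + l ≤ (q.2 : ℕ) - (q.1 : ℕ)}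

/-- An upper set in the poset `[[n]]`. -/
def IsUpperSetE (s : Set (Fin n × Fin n)) : Prop :=
  IsEdgeSet n s ∧ ∀ p ∈ s, ∀ q : Fin n × Fin n, q.1 < q.2 → edgeLe n p q → q ∈ s

/-- An antichain in the poset `[[n]]`. -/
def IsAntichainE (s : Set (Fin n × Fin n)) : Prop :=
  IsEdgeSet n s ∧ ∀ p ∈ s, ∀ q ∈ s, edgeLe n p q → p = q

/-- The set of minimal elements of `s`. -/
def minimalsE (s : Set (Fin n × Fin n)) : Set (Fin n × Fin n) :=
  {p | p ∈ s ∧ ∀ q ∈ s, edgeLe n q p → q = p}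

/-- A set partition of `[n]`: an antichain in both endpoint orders. -/
def IsSetPartitionE (s : Set (Fin n × Fin n)) : Prop :=
  IsEdgeSet n s ∧ (∀ p ∈ s, ∀ q ∈ s, p.1 = q.1 → p = q) ∧
    (∀ p ∈ s, ∀ q ∈ s, p.2 = q.2 → p = q)

/-- A nonnesting set partition of `[n]`. -/
def IsNNSP (s : Set (Fin n × Fin n)) : Prop :=
  IsSetPartitionE n s ∧ ∀ p ∈ s, ∀ q ∈ s, edgeLe n p q → p = q

/-- `nu` gives a splice `S = lam ⊔ nu` of the set partition `lam`. -/
def IsSplice (lam nu : Set (Fin n × Fin n)) : Prop :=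
  IsSetPartitionE n lam ∧ IsSetPartitionE n nu ∧ Disjoint lam nu ∧
  (∀ p ∈ nu, ∃ j : Fin n, p.1 < j ∧ j < p.2 ∧ ((p.1, j) ∈ lam ∨ (j, p.2) ∈ lam)) ∧
  (∀ j k : Fin n, j < k →
    ((∃ i, (i, k) ∈ nu ∧ (i, j) ∈ lam) ↔ (∃ l, (k, l) ∈ lam ∧ (j, l) ∈ nu)))

/-- A tight splice: `S ∩ ↑²lam = ∅`. -/
def IsTightSplice (lam nu : Set (Fin n × Fin n)) : Prop :=
  IsSplice n lam nu ∧ (lam ∪ nu) ∩ upNum n lam 2 = ∅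

/-- A binding `(i,j,k,l)` of the splice `lam ⊔ nu`. -/
def IsBinding (lam nu : Set (Fin n × Fin n)) (b : Fin n × Fin n × Fin n × Fin n) : Prop :=
  (b.1, b.2.1) ∈ lam ∧ (b.2.2.1, b.2.2.2) ∈ lam ∧ (b.1, b.2.2.1) ∈ nu ∧
    (b.2.1, b.2.2.2) ∈ nu ∧ b.2.1 < b.2.2.1

/-- Base relation generating the row equivalence on `nu`. -/
def rowRel (lam nu : Set (Fin n × Fin n)) (p q : Fin n × Fin n) : Prop :=
  ∃ b, IsBinding n lam nu b ∧
    ((p = (b.1, b.2.2.1) ∧ q = (b.2.1, b.2.2.2)) ∨ (q = (b.1, b.2.2.1) ∧ p = (b.2.1, b.2.2.2)))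

/-- Base relation generating the column equivalence on `lam`. -/
def colRel (lam nu : Set (Fin n × Fin n)) (p q : Fin n × Fin n) : Prop :=
  ∃ b, IsBinding n lam nu b ∧
    ((p = (b.1, b.2.1) ∧ q = (b.2.2.1, b.2.2.2)) ∨ (q = (b.1, b.2.1) ∧ p = (b.2.2.1, b.2.2.2)))

/-- The rows of the splice `lam ⊔ nu`. -/
def rowsOf (lam nu : Set (Fin n × Fin n)) : Set (Set (Fin n × Fin n)) :=
  {R | ∃ p ∈ nu, R = {q | q ∈ nu ∧ Relation.ReflTransGen (rowRel n lam nu) p q}}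

/-- The columns of the splice `lam ⊔ nu`. -/
def colsOf (lam nu : Set (Fin n × Fin n)) : Set (Set (Fin n × Fin n)) :=
  {C | ∃ p ∈ lam, C = {q | q ∈ lam ∧ Relation.ReflTransGen (colRel n lam nu) p q}}

/-- The set of bindings of the splice `lam ⊔ nu`. -/
def bindSet (lam nu : Set (Fin n × Fin n)) : Set (Fin n × Fin n × Fin n × Fin n) :=
  {b | IsBinding n lam nu b}

/-- Connectivity in the graph of `lam` on vertex set `[n]`. -/
def conn (lam : Set (Fin n × Fin n)) : Fin n → Fin n → Prop :=
  Relation.ReflTransGen (fun x y => (x, y) ∈ lam ∨ (y, x) ∈ lam)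

/-- `ut_F`: span of the matrix units indexed by `s`. -/
def utOf (s : Set (Fin n × Fin n)) : Submodule F (Matrix (Fin n) (Fin n) F) :=
  Submodule.span F {m | ∃ p ∈ s, m = Matrix.single p.1 p.2 (1 : F)}

/-- The support of a set of matrices. -/
def suppOf (N : Set (Matrix (Fin n) (Fin n) F)) : Set (Fin n × Fin n) :=
  {p | p.1 < p.2 ∧ ∃ a ∈ N, a p.1 p.2 ≠ 0}

/-- `[X, Y]`: the span of all brackets `a*b - b*a`, `a ∈ X`, `b ∈ Y`. -/
def brSpan (X Y : Set (Matrix (Fin n) (Fin n) F)) : Submodule F (Matrix (Fin n) (Fin n) F) :=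
  Submodule.span F {z | ∃ a ∈ X, ∃ b ∈ Y, z = a * b - b * a}


/-- The fundamental commutator computation: for `a ∈ ut_n(F_q)`, `x ∈ F_q` and `s < t`,
`[1 + x e_{s,t}, 1 + a] = 1 + x ∑_{(r,u) ≻ (s,t)} ((1+a)⁻¹)_{r,s} (1+a)_{t,u} e_{r,u}`,
summing over `r ≤ s`, `t ≤ u` with `(r,u) ≠ (s,t)`. -/
theorem group_commutator_formula (n : ℕ) (F : Type*) [Field F] [Fintype F]
    (a : Matrix (Fin n) (Fin n) F) (ha : a ∈ utset n F) (x : F) (s t : Fin n) (hst : s < t) :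
    (1 + x • Matrix.single s t (1 : F))⁻¹ * (1 + a)⁻¹ *
        (1 + x • Matrix.single s t (1 : F)) * (1 + a) =
      1 + x • ∑ r : Fin n, ∑ u : Fin n,
        (if r ≤ s ∧ t ≤ u ∧ (r, u) ≠ (s, t) then
          ((1 + a)⁻¹ r s * (1 + a) t u) • Matrix.single r u (1 : F) else 0) := by
  classical
  set e : Matrix (Fin n) (Fin n) F := Matrix.single s t (1 : F) with he
  set g : Matrix (Fin n) (Fin n) F := 1 + a with hg
  -- g is upper triangular with unit diagonal
  have hgtri : g.BlockTriangular id := by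
    intro i j hij
    simp only [hg, Matrix.add_apply, Matrix.one_apply]
    rw [ha i j (by exact fun h => absurd hij (not_lt.2 h.le)), if_neg (by exact fun h => lt_irrefl _ (h ▸ hij))]
    ring
  have hgdiag : ∀ i, g i i = 1 := by
    intro i
    simp [hg, Matrix.add_apply, ha i i (lt_irrefl i)]
  have hdet : IsUnit g.det := by
    rw [Matrix.det_of_upperTriangular hgtri]
    simp [hgdiag]
  set B : Matrix (Fin n) (Fin n) F := g⁻¹ with hB
  have hBg : B * g = 1 := Matrix.nonsing_inv_mul g hdet
  have hgB : g * B = 1 := Matrix.mul_nonsing_inv g hdet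
  have hBtri : B.BlockTriangular id := by
    haveI := g.invertibleOfIsUnitDet hdet
    exact Matrix.blockTriangular_inv_of_blockTriangular hgtri
  have hBdiag : B s s = 1 := by
    have h1 : (g * B) s s = 1 := by rw [hgB]; simp
    rw [Matrix.mul_apply] at h1
    rw [Finset.sum_eq_single s] at h1
    · rw [hgdiag, one_mul] at h1; exact h1
    · intro k _ hk
      rcases lt_or_gt_of_ne hk with h | h
      · rw [hgtri (show (id k : Fin n) < id s from h)]; ring
      · rw [hBtri (show (id s : Fin n) < id k from h)]; ring
    · simp
  -- e * e = 0
  have hee : e * e = 0 := by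
    ext i j
    simp only [he, Matrix.mul_apply, Matrix.single, Matrix.of_apply, Matrix.zero_apply]
    refine Finset.sum_eq_zero fun k _ => ?_
    by_cases h1 : s = k
    · subst h1; simp [hst.ne']
    · simp [h1]
  -- inverse of 1 + x•e
  have hinv : (1 + x • e)⁻¹ = 1 - x • e := by
    apply Matrix.inv_eq_right_inv
    have h2 : (x • e) * (x • e) = 0 := by
      rw [Matrix.smul_mul, Matrix.mul_smul, hee, smul_zero, smul_zero]
    rw [mul_sub, mul_one, add_mul, one_mul, h2, add_zero, add_sub_cancel_right]
  -- e * B * e = 0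
  have hBts : B t s = 0 := hBtri (show (id s : Fin n) < id t from hst)
  have hBe : B * e = Matrix.of fun i k => B i s * (if k = t then (1 : F) else 0) := by
    ext i k
    simp only [he, Matrix.mul_apply, Matrix.single, Matrix.of_apply, mul_ite, mul_one,
      mul_zero]
    rw [Finset.sum_eq_single s]
    · by_cases hk : t = k <;> simp [hk, eq_comm]
    · intro m _ hm; simp [Ne.symm hm]
    · simp
  have heBe : e * B * e = 0 := by
    rw [Matrix.mul_assoc, hBe]
    ext i j
    rw [Matrix.mul_apply, Finset.sum_eq_single t]
    · simp [Matrix.of_apply, hBts, he, Matrix.single]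
    · intro k _ hk
      simp [he, Matrix.single, Ne.symm hk, Matrix.of_apply]
    · simp
  -- entries of B * e * g
  have hBeg : ∀ i j, (B * e * g) i j = B i s * g t j := by
    intro i j
    rw [Matrix.mul_apply]
    rw [Finset.sum_eq_single t]
    · rw [hBe]; simp
    · intro k _ hk; rw [hBe]; simp [hk]
    · simp
  -- the main identity
  rw [hinv]
  have key : (1 - x • e) * B * (1 + x • e) * g
      = B * g + x • (B * e * g) - x • (e * (B * g)) - x • (x • ((e * B * e) * g)) := by
    simp only [Matrix.smul_mul, Matrix.mul_smul, sub_mul, add_mul, mul_add, mul_sub, one_mul,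
      mul_one, Matrix.mul_assoc]
    abel
  rw [key, hBg, heBe, Matrix.zero_mul, smul_zero, smul_zero, mul_one, sub_zero]
  have hS : B * e * g - e =
      ∑ r : Fin n, ∑ u : Fin n,
        (if r ≤ s ∧ t ≤ u ∧ (r, u) ≠ (s, t) then
          (B r s * g t u) • Matrix.single r u (1 : F) else 0) := by
    ext i j
    rw [Matrix.sub_apply, Matrix.sum_apply]
    have hrhs : ∀ r : Fin n, (∑ u : Fin n,
        (if r ≤ s ∧ t ≤ u ∧ (r, u) ≠ (s, t) then
          (B r s * g t u) • Matrix.single r u (1 : F) else 0)) i j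
        = if r = i then (if i ≤ s ∧ t ≤ j ∧ (i, j) ≠ (s, t) then B i s * g t j else 0) else 0 := by
      intro r
      rw [Matrix.sum_apply]
      rw [Finset.sum_eq_single j]
      · by_cases hc : r ≤ s ∧ t ≤ j ∧ (r, j) ≠ (s, t)
        · rw [if_pos hc]
          by_cases hr : r = i
          · subst hr
            rw [if_pos rfl, if_pos hc]
            simp [Matrix.single]
          · rw [if_neg hr]
            simp [Matrix.single, hr]
        · rw [if_neg hc]
          by_cases hr : r = i
          · subst hr; rw [if_pos rfl, if_neg hc]; simp
          · rw [if_neg hr]; simp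
      · intro u _ hu
        by_cases hc : r ≤ s ∧ t ≤ u ∧ (r, u) ≠ (s, t)
        · rw [if_pos hc]; simp [Matrix.single, hu]
        · rw [if_neg hc]; simp
      · simp
    rw [Finset.sum_congr rfl (fun r _ => hrhs r), Finset.sum_ite_eq' Finset.univ i
      (fun _ => if i ≤ s ∧ t ≤ j ∧ (i, j) ≠ (s, t) then B i s * g t j else 0),
      if_pos (Finset.mem_univ i), hBeg]
    by_cases hc : i ≤ s ∧ t ≤ j ∧ (i, j) ≠ (s, t)
    · rw [if_pos hc]
      have he0 : e i j = 0 := by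
        simp only [he, Matrix.single, Matrix.of_apply]
        rw [if_neg]
        rintro ⟨rfl, rfl⟩
        exact hc.2.2 rfl
      rw [he0, sub_zero]
    · rw [if_neg hc]
      by_cases h1 : i = s ∧ j = t
      · obtain ⟨rfl, rfl⟩ := h1
        rw [hBdiag, hgdiag, one_mul]
        simp [he, Matrix.single]
      · have he0 : e i j = 0 := by
          simp only [he, Matrix.single, Matrix.of_apply]
          rw [if_neg]
          rintro ⟨rfl, rfl⟩
          exact h1 ⟨rfl, rfl⟩
        rw [he0, sub_zero]
        have hne : (i, j) ≠ (s, t) := fun hh =>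
          h1 ⟨congrArg Prod.fst hh, congrArg Prod.snd hh⟩
        have hor : ¬ i ≤ s ∨ ¬ t ≤ j := by tauto
        rcases hor with h | h
        · rw [hBtri (show (id s : Fin n) < id i from lt_of_not_ge h), zero_mul]
        · rw [hgtri (show (id j : Fin n) < id t from lt_of_not_ge h), mul_zero]
  rw [← hS, smul_sub]
  abel

end Paper
end

section
/- The number of upper sets in the poset [[n]] = {(i,j) : 1 ≤ i < j ≤ n} with order (i,j) ⪯ (r,s) iff r ≤ i < j ≤ s equals the n-th Catalan number (1/(n+1))·C(2n,n). -/
open Matrix BigOperators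

namespace Paper

variable (n : ℕ) (F : Type*) [Field F]

namespace CatAux

/-- Ballot sequences: monotone `g` with `g j ≤ j`. -/
def BSeq (n : ℕ) : Type := {g : Fin n → ℕ // Monotone g ∧ ∀ j : Fin n, g j ≤ (j : ℕ)}

instance (n : ℕ) : Finite (BSeq n) := by
  apply Finite.of_injective
    (fun g : BSeq n => (fun j => (⟨g.1 j, lt_of_le_of_lt (g.2.2 j) j.isLt⟩ : Fin n)))
  intro a b h
  exact Subtype.ext (funext fun j => congrArg Fin.val (congrFun h j))

instance : Unique (BSeq 0) where
  default := ⟨fun j => j.elim0, fun a => a.elim0, fun j => j.elim0⟩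
  uniq a := Subtype.ext (funext fun j => j.elim0)

variable {n : ℕ}

lemma bseq_zero (g : BSeq (n + 1)) : g.1 0 = 0 := Nat.le_zero.mp (g.2.2 0)

/-- The touch set of `g`. -/
def touchSet (g : BSeq (n + 1)) : Finset (Fin (n + 1)) :=
  Finset.univ.filter (fun j : Fin (n + 1) => g.1 j = (j : ℕ))

lemma touchSet_nonempty (g : BSeq (n + 1)) : (touchSet g).Nonempty :=
  ⟨0, by simp [touchSet, bseq_zero]⟩

/-- The last time `g` touches the diagonal. -/
def lastTouch (g : BSeq (n + 1)) : Fin (n + 1) :=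
  (touchSet g).max' (touchSet_nonempty g)

lemma lastTouch_spec (g : BSeq (n + 1)) : g.1 (lastTouch g) = (lastTouch g : ℕ) := by
  have := (touchSet g).max'_mem (touchSet_nonempty g)
  exact (Finset.mem_filter.mp this).2

lemma lastTouch_max (g : BSeq (n + 1)) (j : Fin (n + 1)) (hj : g.1 j = (j : ℕ)) :
    j ≤ lastTouch g :=
  Finset.le_max' _ _ (by simp [touchSet, hj])

lemma lt_of_gt_lastTouch (g : BSeq (n + 1)) (j : Fin (n + 1)) (hj : lastTouch g < j) :
    g.1 j < (j : ℕ) :=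
  lt_of_le_of_ne (g.2.2 j) (fun h => absurd (lastTouch_max g j h) (not_le.mpr hj))

def emb1 (i : Fin (n + 1)) (t : Fin (i : ℕ)) : Fin (n + 1) := ⟨t, t.isLt.trans i.isLt⟩

def emb2 (i : Fin (n + 1)) (t : Fin (n - (i : ℕ))) : Fin (n + 1) :=
  ⟨(i : ℕ) + 1 + t, by have := t.isLt; omega⟩

/-- Decomposition of a ballot sequence at its last diagonal touch. -/
def toSig (g : BSeq (n + 1)) : Σ i : Fin (n + 1), BSeq i × BSeq (n - (i : ℕ)) :=
  ⟨lastTouch g,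
    ⟨fun t => g.1 (emb1 (lastTouch g) t),
      fun a b hab => g.2.1 (show emb1 _ a ≤ emb1 _ b from hab),
      fun t => g.2.2 _⟩,
    ⟨fun t => g.1 (emb2 (lastTouch g) t) - (lastTouch g : ℕ),
      fun a b hab => Nat.sub_le_sub_right
        (g.2.1 (show (emb2 _ a : Fin (n+1)) ≤ emb2 _ b from by
          rw [Fin.le_def]
          show (lastTouch g : ℕ) + 1 + a ≤ (lastTouch g : ℕ) + 1 + b
          omega)) _,
      fun t => by
        have h := lt_of_gt_lastTouch g (emb2 (lastTouch g) t)
          (by rw [Fin.lt_def]; show (lastTouch g : ℕ) < (lastTouch g : ℕ) + 1 + t; omega)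
        have h2 : ((emb2 (lastTouch g) t : Fin (n+1)) : ℕ) = (lastTouch g : ℕ) + 1 + t := rfl
        show g.1 (emb2 (lastTouch g) t) - (lastTouch g : ℕ) ≤ (t : ℕ)
        omega⟩⟩

/-- The reassembled function. -/
def glue (x : Σ i : Fin (n + 1), BSeq i × BSeq (n - (i : ℕ))) (j : Fin (n + 1)) : ℕ :=
  if hj : (j : ℕ) < (x.1 : ℕ) then x.2.1.1 ⟨j, hj⟩
  else if hj' : (j : ℕ) = (x.1 : ℕ) then (x.1 : ℕ)
  else (x.1 : ℕ) + x.2.2.1 ⟨(j : ℕ) - (x.1 : ℕ) - 1, by have := j.isLt; omega⟩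

variable (x : Σ i : Fin (n + 1), BSeq i × BSeq (n - (i : ℕ)))

lemma glue_lt {j : Fin (n + 1)} (hj : (j : ℕ) < (x.1 : ℕ)) :
    glue x j = x.2.1.1 ⟨j, hj⟩ := dif_pos hj

lemma glue_eq {j : Fin (n + 1)} (hj : (j : ℕ) = (x.1 : ℕ)) :
    glue x j = (x.1 : ℕ) := by
  rw [glue, dif_neg (by omega), dif_pos hj]

lemma glue_gt {j : Fin (n + 1)} (hj : (x.1 : ℕ) < (j : ℕ)) :
    glue x j = (x.1 : ℕ) + x.2.2.1 ⟨(j : ℕ) - (x.1 : ℕ) - 1, by have := j.isLt; omega⟩ := by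
  rw [glue, dif_neg (by omega), dif_neg (by omega)]

lemma glue_le (j : Fin (n + 1)) : glue x j ≤ (j : ℕ) := by
  rcases lt_trichotomy ((j : ℕ)) ((x.1 : ℕ)) with h | h | h
  · rw [glue_lt x h]
    exact x.2.1.2.2 ⟨j, h⟩
  · rw [glue_eq x h]; omega
  · rw [glue_gt x h]
    have := x.2.2.2.2 ⟨(j : ℕ) - (x.1 : ℕ) - 1, by have := j.isLt; omega⟩
    simp only [Fin.val_mk] at this
    omega

lemma glue_ge_of_ge {j : Fin (n + 1)} (hj : (x.1 : ℕ) ≤ (j : ℕ)) : (x.1 : ℕ) ≤ glue x j := by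
  rcases eq_or_lt_of_le hj with h | h
  · rw [glue_eq x h.symm]
  · rw [glue_gt x h]; omega

lemma glue_mono : Monotone (glue x) := by
  intro a b hab
  rw [Fin.le_def] at hab
  rcases lt_trichotomy ((b : ℕ)) ((x.1 : ℕ)) with hb | hb | hb
  · have ha : (a : ℕ) < (x.1 : ℕ) := by omega
    rw [glue_lt x ha, glue_lt x hb]
    exact x.2.1.2.1 (show ((⟨a, ha⟩ : Fin (x.1 : ℕ)) ≤ ⟨b, hb⟩) from hab)
  · rcases lt_or_eq_of_le (show (a : ℕ) ≤ (x.1 : ℕ) by omega) with ha | ha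
    · rw [glue_lt x ha, glue_eq x hb]
      have := x.2.1.2.2 ⟨a, ha⟩
      simp only [Fin.val_mk] at this
      omega
    · rw [glue_eq x ha, glue_eq x hb]
  · rcases lt_trichotomy ((a : ℕ)) ((x.1 : ℕ)) with ha | ha | ha
    · calc glue x a ≤ (a : ℕ) := glue_le x a
        _ ≤ (x.1 : ℕ) := by omega
        _ ≤ glue x b := glue_ge_of_ge x (by omega)
    · rw [glue_eq x ha]
      exact glue_ge_of_ge x (by omega)
    · rw [glue_gt x ha, glue_gt x hb]
      have := x.2.2.2.1 (show ((⟨(a : ℕ) - (x.1 : ℕ) - 1, by have := a.isLt; omega⟩ : Fin (n - (x.1 : ℕ))) ≤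
          ⟨(b : ℕ) - (x.1 : ℕ) - 1, by have := b.isLt; omega⟩) from by
        rw [Fin.le_def]; simp only [Fin.val_mk]; omega)
      omega

/-- Reassembling a ballot sequence from the decomposition. -/
def ofSig (x : Σ i : Fin (n + 1), BSeq i × BSeq (n - (i : ℕ))) : BSeq (n + 1) :=
  ⟨glue x, glue_mono x, glue_le x⟩

lemma ofSig_toSig (g : BSeq (n + 1)) : ofSig (toSig g) = g := by
  apply Subtype.ext
  funext j
  show glue (toSig g) j = g.1 j
  have hfst : ((toSig g).1 : ℕ) = (lastTouch g : ℕ) := rfl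
  rcases lt_trichotomy ((j : ℕ)) ((lastTouch g : ℕ)) with h | h | h
  · rw [glue_lt (toSig g) (by rw [hfst]; exact h)]
    exact congrArg g.1 (Fin.ext rfl)
  · have hj : j = lastTouch g := Fin.ext h
    refine (glue_eq (toSig g) (by rw [hfst]; exact h)).trans ?_
    simp only [hfst, hj, lastTouch_spec]
  · rw [glue_gt (toSig g) (by rw [hfst]; exact h)]
    show (lastTouch g : ℕ) + (g.1 (emb2 (lastTouch g) _) - (lastTouch g : ℕ)) = g.1 j
    have hje : emb2 (lastTouch g) ⟨(j : ℕ) - ((toSig g).1 : ℕ) - 1, by have := j.isLt; omega⟩ = j := by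
      apply Fin.ext
      show (lastTouch g : ℕ) + 1 + ((j : ℕ) - (lastTouch g : ℕ) - 1) = (j : ℕ)
      omega
    have hgj : g.1 (emb2 (lastTouch g) ⟨(j : ℕ) - ((toSig g).1 : ℕ) - 1, by have := j.isLt; omega⟩) = g.1 j :=
      congrArg g.1 hje
    have hmon : g.1 (lastTouch g) ≤ g.1 j := g.2.1 (by rw [Fin.le_def]; omega)
    rw [lastTouch_spec g] at hmon
    exact (Nat.add_sub_cancel' (le_of_le_of_eq hmon hgj.symm)).trans hgj

lemma glue_lt_self {j : Fin (n + 1)} (hj : (x.1 : ℕ) < (j : ℕ)) : glue x j < (j : ℕ) := by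
  rw [glue_gt x hj]
  have := x.2.2.2.2 ⟨(j : ℕ) - (x.1 : ℕ) - 1, by have := j.isLt; omega⟩
  simp only [Fin.val_mk] at this
  omega

lemma ofSig_injective : Function.Injective (ofSig (n := n)) := by
  intro x y h
  have hg : ∀ j, glue x j = glue y j := fun j => congrFun (congrArg Subtype.val h) j
  have hii : x.1 = y.1 := by
    by_contra hne
    have hne' : (x.1 : ℕ) ≠ (y.1 : ℕ) := fun hc => hne (Fin.ext hc)
    rcases Nat.lt_or_ge (x.1 : ℕ) (y.1 : ℕ) with hlt | hge
    · have h1 := glue_lt_self x (j := y.1) hlt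
      rw [hg y.1, glue_eq y rfl] at h1
      omega
    · have hlt : (y.1 : ℕ) < (x.1 : ℕ) := by omega
      have h1 := glue_lt_self y (j := x.1) hlt
      rw [← hg x.1, glue_eq x rfl] at h1
      omega
  obtain ⟨i, h1, h2⟩ := x
  obtain ⟨i', h1', h2'⟩ := y
  have hii' : i = i' := hii
  subst hii'
  have e1 : h1 = h1' := by
    apply Subtype.ext
    funext t
    have ht : ((⟨(t : ℕ), t.isLt.trans i.isLt⟩ : Fin (n + 1)) : ℕ) < (i : ℕ) := t.isLt
    have hthis := hg ⟨(t : ℕ), t.isLt.trans i.isLt⟩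
    rw [glue_lt ⟨i, h1, h2⟩ ht, glue_lt ⟨i, h1', h2'⟩ ht] at hthis
    simp only [Fin.eta] at hthis
    exact hthis
  have e2 : h2 = h2' := by
    apply Subtype.ext
    funext t
    have hlt : (i : ℕ) + 1 + (t : ℕ) < n + 1 := by have := t.isLt; omega
    have ht : (i : ℕ) < ((⟨(i : ℕ) + 1 + (t : ℕ), hlt⟩ : Fin (n + 1)) : ℕ) := by
      show (i : ℕ) < (i : ℕ) + 1 + (t : ℕ); omega
    have hthis := hg ⟨(i : ℕ) + 1 + (t : ℕ), hlt⟩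
    rw [glue_gt ⟨i, h1, h2⟩ ht, glue_gt ⟨i, h1', h2'⟩ ht] at hthis
    have et : ∀ (p : ((⟨(i : ℕ) + 1 + (t : ℕ), hlt⟩ : Fin (n + 1)) : ℕ) - (i : ℕ) - 1 < n - (i : ℕ)),
        (⟨((⟨(i : ℕ) + 1 + (t : ℕ), hlt⟩ : Fin (n + 1)) : ℕ) - (i : ℕ) - 1, p⟩ : Fin (n - (i : ℕ))) = t := by
      intro p
      apply Fin.ext
      show (i : ℕ) + 1 + (t : ℕ) - (i : ℕ) - 1 = (t : ℕ)
      omega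
    rw [et] at hthis
    show h2.1 t = h2'.1 t
    exact Nat.add_left_cancel hthis
  rw [e1, e2]

lemma nat_card_sigma {ι : Type*} [Fintype ι] (f : ι → Type*) [∀ i, Finite (f i)] :
    Nat.card (Σ i, f i) = ∑ i, Nat.card (f i) := by
  letI := fun i => Fintype.ofFinite (f i)
  simp [Nat.card_eq_fintype_card, Fintype.card_sigma]

lemma card_bseq : ∀ n, Nat.card (BSeq n) = catalan n := by
  intro n
  induction n using Nat.strong_induction_on with
  | _ n ih =>
    match n with
    | 0 => simp [Nat.card_unique, catalan_zero]
    | m + 1 =>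
      have hbij : Function.Bijective (ofSig (n := m)) :=
        ⟨ofSig_injective, fun g => ⟨toSig g, ofSig_toSig g⟩⟩
      rw [← Nat.card_eq_of_bijective _ hbij, nat_card_sigma, catalan_succ]
      apply Finset.sum_congr rfl
      intro i _
      rw [Nat.card_prod, ih i (by have := i.isLt; omega), ih (m - (i : ℕ)) (by omega)]

end CatAux

section Bridge
open CatAux

open CatAux

lemma ncard_Iio {n : ℕ} (b : Fin n) : (Set.Iio b).ncard = (b : ℕ) := by
  rw [← Finset.coe_Iio, Set.ncard_coe_finset, Fin.card_Iio]

lemma ncard_Iic {n : ℕ} (b : Fin n) : (Set.Iic b).ncard = (b : ℕ) + 1 := by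
  rw [← Finset.coe_Iic, Set.ncard_coe_finset, Fin.card_Iic]

lemma mem_downclosed_iff {n : ℕ} (D : Set (Fin n))
    (hD : ∀ a b : Fin n, a ≤ b → b ∈ D → a ∈ D) (i : Fin n) :
    i ∈ D ↔ (i : ℕ) < D.ncard := by
  constructor
  · intro hi
    have hsub : Set.Iic i ⊆ D := fun a ha => hD a i ha hi
    have := Set.ncard_le_ncard hsub (Set.toFinite D)
    rw [ncard_Iic] at this
    omega
  · intro hi
    by_contra hni
    have hsub : D ⊆ Set.Iio i := by
      intro a ha
      rw [Set.mem_Iio]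
      by_contra hai
      exact hni (hD i a (not_lt.mp hai) ha)
    have := Set.ncard_le_ncard hsub (Set.toFinite _)
    rw [ncard_Iio] at this
    omega

def toUpper (n : ℕ) (g : BSeq n) : {s : Set (Fin n × Fin n) // IsUpperSetE n s} :=
  ⟨{p | (p.1 : ℕ) < g.1 p.2}, by
    constructor
    · intro p hp
      have h1 : (p.1 : ℕ) < g.1 p.2 := hp
      have h2 := g.2.2 p.2
      rw [Fin.lt_def]; omega
    · intro p hp q hq hle
      have h1 : (p.1 : ℕ) < g.1 p.2 := hp
      have h2 : (q.1 : ℕ) ≤ (p.1 : ℕ) := Fin.le_def.mp hle.1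
      have h3 : g.1 p.2 ≤ g.1 q.2 := g.2.1 hle.2
      show (q.1 : ℕ) < g.1 q.2
      omega⟩

lemma toUpper_injective (n : ℕ) : Function.Injective (toUpper n) := by
  intro a b h
  have hs : {p : Fin n × Fin n | (p.1 : ℕ) < a.1 p.2} = {p | (p.1 : ℕ) < b.1 p.2} :=
    congrArg Subtype.val h
  apply Subtype.ext; funext j
  by_contra hne
  rcases Nat.lt_or_ge (a.1 j) (b.1 j) with hlt | hge
  · have hjn : a.1 j < n := lt_of_le_of_lt (a.2.2 j) j.isLt
    have hmem : ((⟨a.1 j, hjn⟩ : Fin n), j) ∈ {p : Fin n × Fin n | (p.1 : ℕ) < b.1 p.2} := hlt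
    rw [← hs] at hmem
    simp only [Set.mem_setOf_eq, Fin.val_mk] at hmem
    omega
  · have hlt : b.1 j < a.1 j := by omega
    have hjn : b.1 j < n := lt_of_le_of_lt (b.2.2 j) j.isLt
    have hmem : ((⟨b.1 j, hjn⟩ : Fin n), j) ∈ {p : Fin n × Fin n | (p.1 : ℕ) < a.1 p.2} := hlt
    rw [hs] at hmem
    simp only [Set.mem_setOf_eq, Fin.val_mk] at hmem
    omega

lemma toUpper_surjective (n : ℕ) : Function.Surjective (toUpper n) := by
  rintro ⟨s, hs⟩
  refine ⟨⟨fun j => Set.ncard {i : Fin n | (i, j) ∈ s}, ?_, ?_⟩, ?_⟩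
  · intro j j' hjj
    apply Set.ncard_le_ncard _ (Set.toFinite _)
    intro i hi
    exact hs.2 (i, j) hi (i, j') (lt_of_lt_of_le (hs.1 (i, j) hi) hjj) ⟨le_refl i, hjj⟩
  · intro j
    have hsub : {i : Fin n | (i, j) ∈ s} ⊆ Set.Iio j := fun i hi => hs.1 (i, j) hi
    have := Set.ncard_le_ncard hsub (Set.toFinite _)
    rw [ncard_Iio] at this
    exact this
  · apply Subtype.ext
    show {p : Fin n × Fin n | (p.1 : ℕ) < Set.ncard {i : Fin n | (i, p.2) ∈ s}} = s
    ext p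
    rw [Set.mem_setOf_eq]
    have hdc : ∀ a b : Fin n, a ≤ b → b ∈ {i : Fin n | (i, p.2) ∈ s} →
        a ∈ {i : Fin n | (i, p.2) ∈ s} := by
      intro a b hab hb
      exact hs.2 (b, p.2) hb (a, p.2) (lt_of_le_of_lt hab (hs.1 (b, p.2) hb)) ⟨hab, le_refl _⟩
    have hmi := (mem_downclosed_iff _ hdc p.1).symm
    simpa using hmi

end Bridge

/-- The number of upper sets of the poset `[[n]]` is the `n`-th Catalan number
`(1/(n+1)) * C(2n, n)`. -/
theorem card_upperSets_eq_catalan (n : ℕ) :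
    Nat.card {s : Set (Fin n × Fin n) // IsUpperSetE n s} = (2 * n).choose n / (n + 1) := by
  rw [← Nat.card_eq_of_bijective (toUpper n) ⟨toUpper_injective n, toUpper_surjective n⟩,
    CatAux.card_bseq, catalan_eq_centralBinom_div, Nat.centralBinom_eq_two_mul_choose]

end Paper
end

section
/- Let n be a Lie algebra ideal of the strictly upper triangular Lie algebra ut_n(F_q), and let λ be the set of minimal elements of its support (where the support supp(n) = {(i,j) : a_{i,j} ≠ 0 for some a ∈ n} is an upper set in [[n]]). Then [ut_n(F_q), [ut_n(F_q), n]] equals ut_{↑²λ}, the span of matrix units e_{i,l} over all (i,l) in the upper set of elements at height at least 2 above λ, i.e., (i,l) such that there is (j,k) ∈ λ with i ≤ j < k ≤ l and (l - i) ≥ (k - j) + 2. -/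
open Matrix BigOperators

namespace Paper

variable (n : ℕ) (F : Type*) [Field F]

section DBHelpers

variable {n : ℕ} {F : Type*} [Field F]

lemma br_std_apply (i j y x : Fin n) (M : Matrix (Fin n) (Fin n) F) :
    (Matrix.single i j (1:F) * M - M * Matrix.single i j (1:F)) y x
      = (if y = i then M j x else 0) - (if x = j then M y i else 0) := by
  rcases eq_or_ne y i with rfl | hy <;> rcases eq_or_ne x j with rfl | hx <;>
    simp [Matrix.sub_apply, *]

lemma std_apply (i j y x : Fin n) (c : F) :
    Matrix.single i j c y x = if y = i ∧ x = j then c else 0 := by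
  simp [Matrix.single, eq_comm, and_comm]

lemma row_matrix_eq_sum (r : Fin n) (f : Fin n → F) :
    (Matrix.of fun y x => if y = r then f x else 0)
      = ∑ x : Fin n, f x • Matrix.single r x (1:F) := by
  ext y x
  rw [Matrix.sum_apply]
  by_cases hy : y = r
  · simp [Matrix.single, hy, Finset.sum_ite_eq, eq_comm]
  · simp [Matrix.single, hy, Ne.symm hy]

lemma col_matrix_eq_sum (s : Fin n) (g : Fin n → F) :
    (Matrix.of fun y x => if x = s then g y else 0)
      = ∑ y : Fin n, g y • Matrix.single y s (1:F) := by
  ext y x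
  rw [Matrix.sum_apply]
  by_cases hx : x = s
  · simp [Matrix.single, hx, Finset.sum_ite_eq, eq_comm]
  · simp [Matrix.single, hx, Ne.symm hx]

lemma std_mem_utset {i j : Fin n} (hij : i < j) :
    Matrix.single i j (1:F) ∈ utset n F := by
  intro y x h
  have hne : ¬(y = i ∧ x = j) := by rintro ⟨rfl, rfl⟩; exact h hij
  rw [std_apply, if_neg hne]

lemma exists_min_below (S : Set (Fin n × Fin n)) (hE : ∀ p ∈ S, p.1 < p.2) :
    ∀ m : ℕ, ∀ p ∈ S, ((p.2:ℕ) - (p.1:ℕ)) ≤ m → ∃ q ∈ minimalsE n S, edgeLe n q p := by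
  intro m
  induction m with
  | zero =>
    intro p hp hm
    have h := hE p hp
    rw [Fin.lt_def] at h
    omega
  | succ m ih =>
    intro p hp hm
    by_cases hmin : ∀ q ∈ S, edgeLe n q p → q = p
    · exact ⟨p, ⟨hp, hmin⟩, ⟨le_refl _, le_refl _⟩⟩
    · push_neg at hmin
      obtain ⟨q, hq, hle, hne⟩ := hmin
      have h1 := hE p hp; have h2 := hE q hq
      rw [Fin.lt_def] at h1 h2
      obtain ⟨ha, hb⟩ := hle
      rw [Fin.le_def] at ha hb
      have hne' : (q.1:ℕ) ≠ (p.1:ℕ) ∨ (q.2:ℕ) ≠ (p.2:ℕ) := by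
        by_contra hc
        push_neg at hc
        exact hne (Prod.ext (Fin.ext hc.1) (Fin.ext hc.2))
      obtain ⟨w, hw, hwle⟩ := ih q hq (by omega)
      refine ⟨w, hw, ?_, ?_⟩
      · exact le_trans (Fin.le_def.mpr ha) hwle.1
      · exact le_trans hwle.2 (Fin.le_def.mpr hb)

lemma mem_up0 (N : Set (Matrix (Fin n) (Fin n) F))
    (hsub : N ⊆ utset n F) {a : Matrix (Fin n) (Fin n) F} (ha : a ∈ N)
    {r s : Fin n} (h : a r s ≠ 0) :
    (r, s) ∈ upNum n (minimalsE n (suppOf n F N)) 0 := by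
  have hrs : r < s := by
    by_contra hc
    exact h (hsub ha r s hc)
  have hS : (r, s) ∈ suppOf n F N := ⟨hrs, a, ha, h⟩
  obtain ⟨q, hq, hle⟩ := exists_min_below (suppOf n F N) (fun p hp => hp.1)
    ((s:ℕ) - (r:ℕ)) (r, s) hS (le_refl _)
  refine ⟨hrs, q, hq, hle, ?_⟩
  obtain ⟨h1, h2⟩ := hle
  rw [Fin.le_def] at h1 h2
  omega

/-- Matrices supported (entrywise) inside `s`. -/
def sptSub (s : Set (Fin n × Fin n)) : Submodule F (Matrix (Fin n) (Fin n) F) where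
  carrier := {m | ∀ p : Fin n × Fin n, p ∉ s → m p.1 p.2 = 0}
  add_mem' := by intro a b ha hb p hp; simp [Matrix.add_apply, ha p hp, hb p hp]
  zero_mem' := by intro p hp; simp
  smul_mem' := by intro c a ha p hp; simp [Matrix.smul_apply, ha p hp]

lemma mem_sptSub {s : Set (Fin n × Fin n)} {m : Matrix (Fin n) (Fin n) F} :
    m ∈ sptSub s ↔ ∀ p : Fin n × Fin n, p ∉ s → m p.1 p.2 = 0 := Iff.rfl

lemma step_mem (lam : Set (Fin n × Fin n)) (l : ℕ) (a b : Matrix (Fin n) (Fin n) F)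
    (haut : a ∈ utset n F) (hb : b ∈ sptSub (upNum n lam l)) :
    a * b - b * a ∈ sptSub (upNum n lam (l+1)) := by
  rintro ⟨y, x⟩ hp
  have e1 : ∀ k, a y k * b k x = 0 := by
    intro k
    by_cases h1 : a y k = 0
    · simp [h1]
    by_cases h2 : b k x = 0
    · simp [h2]
    exfalso; apply hp
    have hyk : (y:ℕ) < (k:ℕ) := by
      rw [← Fin.lt_def]; by_contra h; exact h1 (haut y k h)
    have hkx : (k, x) ∈ upNum n lam l := by
      by_contra h; exact h2 (hb (k, x) h)
    obtain ⟨hkx2, ⟨qi, qj⟩, hq, ⟨h3, h4⟩, h5⟩ := hkx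
    dsimp only at hkx2 h3 h4 h5
    rw [Fin.lt_def] at hkx2
    rw [Fin.le_def] at h3 h4
    refine ⟨(Fin.lt_def.mpr (by omega) : y < x), (qi, qj), hq,
      ⟨(Fin.le_def.mpr (by omega) : y ≤ qi), (Fin.le_def.mpr (by omega) : qj ≤ x)⟩, ?_⟩
    show ((qj:ℕ) - (qi:ℕ)) + (l+1) ≤ (x:ℕ) - (y:ℕ)
    omega
  have e2 : ∀ k, b y k * a k x = 0 := by
    intro k
    by_cases h1 : a k x = 0
    · simp [h1]
    by_cases h2 : b y k = 0
    · simp [h2]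
    exfalso; apply hp
    have hkx : (k:ℕ) < (x:ℕ) := by
      rw [← Fin.lt_def]; by_contra h; exact h1 (haut k x h)
    have hyk : (y, k) ∈ upNum n lam l := by
      by_contra h; exact h2 (hb (y, k) h)
    obtain ⟨hyk2, ⟨qi, qj⟩, hq, ⟨h3, h4⟩, h5⟩ := hyk
    dsimp only at hyk2 h3 h4 h5
    rw [Fin.lt_def] at hyk2
    rw [Fin.le_def] at h3 h4
    refine ⟨(Fin.lt_def.mpr (by omega) : y < x), (qi, qj), hq,
      ⟨(Fin.le_def.mpr (by omega) : y ≤ qi), (Fin.le_def.mpr (by omega) : qj ≤ x)⟩, ?_⟩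
    show ((qj:ℕ) - (qi:ℕ)) + (l+1) ≤ (x:ℕ) - (y:ℕ)
    omega
  show (a * b - b * a) y x = 0
  simp only [Matrix.sub_apply, Matrix.mul_apply]
  rw [Finset.sum_eq_zero (fun k _ => e1 k), Finset.sum_eq_zero (fun k _ => e2 k), sub_zero]

lemma sptSub_le_utOf (s : Set (Fin n × Fin n)) :
    (sptSub s : Submodule F (Matrix (Fin n) (Fin n) F)) ≤ utOf n F s := by
  intro m hm
  rw [Matrix.matrix_eq_sum_single m]
  apply Submodule.sum_mem
  intro i _
  apply Submodule.sum_mem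
  intro j _
  by_cases h : (i, j) ∈ s
  · have he : Matrix.single i j (m i j) = m i j • Matrix.single i j (1:F) := by
      rw [Matrix.smul_single, smul_eq_mul, mul_one]
    rw [he]
    exact Submodule.smul_mem _ _ (Submodule.subset_span ⟨(i, j), h, rfl⟩)
  · rw [hm (i, j) h]
    simp

lemma std_mem_br2 (N : Submodule F (Matrix (Fin n) (Fin n) F))
    (hsub : (N : Set (Matrix (Fin n) (Fin n) F)) ⊆ utset n F) :
    ∀ m : ℕ, ∀ r s : Fin n,
      (r, s) ∈ upNum n (minimalsE n (suppOf n F (N : Set (Matrix (Fin n) (Fin n) F)))) 2 →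
      (r:ℕ) + (n - (s:ℕ)) ≤ m →
      Matrix.single r s (1:F) ∈
        brSpan n F (utset n F)
          (brSpan n F (utset n F) (N : Set (Matrix (Fin n) (Fin n) F)) :
            Set (Matrix (Fin n) (Fin n) F)) := by
  intro m
  induction m with
  | zero =>
    intro r s hrs hm
    have := s.isLt
    omega
  | succ m ih =>
    intro r s hrs hm
    obtain ⟨hrs1, ⟨i, j⟩, hlam, ⟨hri, hjs⟩, hht⟩ := hrs
    dsimp only at hri hjs hht
    have hij : i < j := hlam.1.1
    obtain ⟨a, haN, haij⟩ := hlam.1.2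
    have hmin := hlam.2
    have haut : a ∈ utset n F := hsub haN
    have hriN : (r:ℕ) ≤ (i:ℕ) := Fin.le_def.mp hri
    have hjsN : (j:ℕ) ≤ (s:ℕ) := Fin.le_def.mp hjs
    have hijN : (i:ℕ) < (j:ℕ) := Fin.lt_def.mp hij
    have hrs1N : (r:ℕ) < (s:ℕ) := Fin.lt_def.mp hrs1
    rcases eq_or_lt_of_le hri with hri' | hri'
    · -- r = i : case C, s - j ≥ 2
      subst hri'
      have hsn := s.isLt
      have hs2 : (j:ℕ) + 2 ≤ (s:ℕ) := by omega
      set t : Fin n := ⟨(j:ℕ)+1, by omega⟩ with ht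
      have hjt : j < t := by rw [Fin.lt_def]; simp [ht]
      have hts : t < s := by rw [Fin.lt_def]; simp [ht]; omega
      set e1 := Matrix.single j t (1:F) with he1
      set e2 := Matrix.single t s (1:F) with he2
      have hbmem : e1 * a - a * e1 ∈
          brSpan n F (utset n F) (N : Set (Matrix (Fin n) (Fin n) F)) :=
        Submodule.subset_span ⟨e1, std_mem_utset hjt, a, haN, rfl⟩
      have hzmem : e2 * (e1 * a - a * e1) - (e1 * a - a * e1) * e2 ∈
          brSpan n F (utset n F)
            (brSpan n F (utset n F) (N : Set (Matrix (Fin n) (Fin n) F)) :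
              Set (Matrix (Fin n) (Fin n) F)) :=
        Submodule.subset_span ⟨e2, std_mem_utset hts, _, hbmem, rfl⟩
      have hjsF : j < s := Fin.lt_def.mpr (by omega)
      have hasj : a s j = 0 := haut s j (not_lt.mpr hjsF.le)
      have hatt : a t t = 0 := haut t t (lt_irrefl t)
      have hzeq : e2 * (e1 * a - a * e1) - (e1 * a - a * e1) * e2
          = Matrix.of fun y x => if x = s then a y j else 0 := by
        ext y x
        rw [he1, he2, br_std_apply, br_std_apply, br_std_apply]
        have h1 : s ≠ j := hjsF.ne'
        have h2 : s ≠ t := hts.ne'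
        by_cases hy : y = t <;> by_cases hx : x = s <;>
          simp [hy, hx, h1, h2, hasj, hatt, Matrix.of_apply]
      have hzsum : e2 * (e1 * a - a * e1) - (e1 * a - a * e1) * e2
          = ∑ y : Fin n, a y j • Matrix.single y s (1:F) := by
        rw [hzeq, col_matrix_eq_sum]
      have hkey : a r j • Matrix.single r s (1:F)
          = (e2 * (e1 * a - a * e1) - (e1 * a - a * e1) * e2)
            - ∑ y ∈ Finset.univ.erase r, a y j • Matrix.single y s (1:F) := by
        rw [hzsum, ← Finset.add_sum_erase Finset.univ _ (Finset.mem_univ r)]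
        exact (add_sub_cancel_right _ _).symm
      have hfin : Matrix.single r s (1:F)
          = (a r j)⁻¹ • ((e2 * (e1 * a - a * e1) - (e1 * a - a * e1) * e2)
            - ∑ y ∈ Finset.univ.erase r, a y j • Matrix.single y s (1:F)) := by
        rw [← hkey, smul_smul, inv_mul_cancel₀ haij, one_smul]
      rw [hfin]
      refine Submodule.smul_mem _ _ (Submodule.sub_mem _ hzmem (Submodule.sum_mem _ ?_))
      intro y hy
      rcases eq_or_ne (a y j) 0 with h0 | h0
      · rw [h0, zero_smul]; exact Submodule.zero_mem _
      have hyr : y ≠ r := (Finset.mem_erase.mp hy).1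
      have hyj : y < j := by by_contra hc; exact h0 (haut y j hc)
      have hyjN : (y:ℕ) < (j:ℕ) := Fin.lt_def.mp hyj
      have hmemS : (y, j) ∈ suppOf n F (N : Set (Matrix (Fin n) (Fin n) F)) :=
        ⟨hyj, a, haN, h0⟩
      have hyrN : (y:ℕ) < (r:ℕ) := by
        rcases lt_or_ge (y:ℕ) (r:ℕ) with h | h
        · exact h
        · exact absurd (congrArg Prod.fst (hmin (y, j) hmemS ⟨Fin.le_def.mpr h, le_refl j⟩)) hyr
      obtain ⟨⟨qi, qj⟩, hq, hle⟩ := exists_min_below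
        (suppOf n F (N : Set (Matrix (Fin n) (Fin n) F))) (fun p hp => hp.1)
        ((j:ℕ) - (y:ℕ)) (y, j) hmemS (le_refl _)
      have hq1 : (qi:ℕ) < (qj:ℕ) := Fin.lt_def.mp hq.1.1
      have hle1 : (y:ℕ) ≤ (qi:ℕ) := Fin.le_def.mp hle.1
      have hle2 : (qj:ℕ) ≤ (j:ℕ) := Fin.le_def.mp hle.2
      have hmem2 : (y, s) ∈ upNum n
          (minimalsE n (suppOf n F (N : Set (Matrix (Fin n) (Fin n) F)))) 2 := by
        refine ⟨(Fin.lt_def.mpr (by omega) : y < s), (qi, qj), hq,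
          ⟨(Fin.le_def.mpr (by omega) : y ≤ qi), (Fin.le_def.mpr (by omega) : qj ≤ s)⟩, ?_⟩
        show ((qj:ℕ) - (qi:ℕ)) + 2 ≤ (s:ℕ) - (y:ℕ)
        omega
      have hms : (y:ℕ) + (n - (s:ℕ)) ≤ m := by omega
      exact Submodule.smul_mem _ _ (ih y s hmem2 hms)
    · rcases eq_or_lt_of_le hjs with hjs' | hjs'
      · -- j = s : case B, i - r ≥ 2
        subst hjs'
        have hin := i.isLt
        have hi2 : (r:ℕ) + 2 ≤ (i:ℕ) := by omega
        set t : Fin n := ⟨(r:ℕ)+1, by omega⟩ with ht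
        have hrt : r < t := by rw [Fin.lt_def]; simp [ht]
        have hti : t < i := by rw [Fin.lt_def]; simp [ht]; omega
        set e1 := Matrix.single t i (1:F) with he1
        set e2 := Matrix.single r t (1:F) with he2
        have hbmem : e1 * a - a * e1 ∈
            brSpan n F (utset n F) (N : Set (Matrix (Fin n) (Fin n) F)) :=
          Submodule.subset_span ⟨e1, std_mem_utset hti, a, haN, rfl⟩
        have hzmem : e2 * (e1 * a - a * e1) - (e1 * a - a * e1) * e2 ∈
            brSpan n F (utset n F)
              (brSpan n F (utset n F) (N : Set (Matrix (Fin n) (Fin n) F)) :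
                Set (Matrix (Fin n) (Fin n) F)) :=
          Submodule.subset_span ⟨e2, std_mem_utset hrt, _, hbmem, rfl⟩
        have hatt : a t t = 0 := haut t t (lt_irrefl t)
        have hair : a i r = 0 := haut i r (not_lt.mpr hri'.le)
        have hzeq : e2 * (e1 * a - a * e1) - (e1 * a - a * e1) * e2
            = Matrix.of fun y x => if y = r then a i x else 0 := by
          ext y x
          rw [he1, he2, br_std_apply, br_std_apply, br_std_apply]
          have h2 : r ≠ i := hri'.ne
          by_cases hy : y = r <;> by_cases hx : x = t <;>
            simp [hy, hx, h2, hatt, hair, Matrix.of_apply]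
        have hzsum : e2 * (e1 * a - a * e1) - (e1 * a - a * e1) * e2
            = ∑ x : Fin n, a i x • Matrix.single r x (1:F) := by
          rw [hzeq, row_matrix_eq_sum]
        have hkey : a i j • Matrix.single r j (1:F)
            = (e2 * (e1 * a - a * e1) - (e1 * a - a * e1) * e2)
              - ∑ x ∈ Finset.univ.erase j, a i x • Matrix.single r x (1:F) := by
          rw [hzsum, ← Finset.add_sum_erase Finset.univ _ (Finset.mem_univ j)]
          exact (add_sub_cancel_right _ _).symm
        have hfin : Matrix.single r j (1:F)
            = (a i j)⁻¹ • ((e2 * (e1 * a - a * e1) - (e1 * a - a * e1) * e2)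
              - ∑ x ∈ Finset.univ.erase j, a i x • Matrix.single r x (1:F)) := by
          rw [← hkey, smul_smul, inv_mul_cancel₀ haij, one_smul]
        rw [hfin]
        refine Submodule.smul_mem _ _ (Submodule.sub_mem _ hzmem (Submodule.sum_mem _ ?_))
        intro x hx
        rcases eq_or_ne (a i x) 0 with h0 | h0
        · rw [h0, zero_smul]; exact Submodule.zero_mem _
        have hxj : x ≠ j := (Finset.mem_erase.mp hx).1
        have hix : i < x := by by_contra hc; exact h0 (haut i x hc)
        have hixN : (i:ℕ) < (x:ℕ) := Fin.lt_def.mp hix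
        have hxn := x.isLt
        have hjx : (j:ℕ) < (x:ℕ) := by
          rcases lt_or_ge (j:ℕ) (x:ℕ) with h | h
          · exact h
          · exact absurd (congrArg Prod.snd
              (hmin (i, x) ⟨hix, a, haN, h0⟩ ⟨le_refl i, Fin.le_def.mpr h⟩)) hxj
        have hmem2 : (r, x) ∈ upNum n
            (minimalsE n (suppOf n F (N : Set (Matrix (Fin n) (Fin n) F)))) 2 := by
          refine ⟨(Fin.lt_def.mpr (by omega) : r < x), (i, j), hlam,
            ⟨hri, (Fin.le_def.mpr (by omega) : j ≤ x)⟩, ?_⟩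
          show ((j:ℕ) - (i:ℕ)) + 2 ≤ (x:ℕ) - (r:ℕ)
          omega
        have hms : (r:ℕ) + (n - (x:ℕ)) ≤ m := by omega
        exact Submodule.smul_mem _ _ (ih r x hmem2 hms)
      · -- case A : r < i and j < s
        set e1 := Matrix.single j s (1:F) with he1
        set e2 := Matrix.single r i (1:F) with he2
        have hbmem : e1 * a - a * e1 ∈
            brSpan n F (utset n F) (N : Set (Matrix (Fin n) (Fin n) F)) :=
          Submodule.subset_span ⟨e1, std_mem_utset hjs', a, haN, rfl⟩
        have hzmem : e2 * (e1 * a - a * e1) - (e1 * a - a * e1) * e2 ∈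
            brSpan n F (utset n F)
              (brSpan n F (utset n F) (N : Set (Matrix (Fin n) (Fin n) F)) :
                Set (Matrix (Fin n) (Fin n) F)) :=
          Submodule.subset_span ⟨e2, std_mem_utset hri', _, hbmem, rfl⟩
        have hasr : a s r = 0 := haut s r (not_lt.mpr hrs1.le)
        have hzeq : e2 * (e1 * a - a * e1) - (e1 * a - a * e1) * e2
            = (-(a i j)) • Matrix.single r s (1:F) := by
          ext y x
          rw [he1, he2, br_std_apply, br_std_apply, br_std_apply]
          have h1 : i ≠ j := hij.ne
          have h2 : r ≠ s := hrs1.ne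
          have h3 : s ≠ i := (lt_trans hij hjs').ne'
          rw [Matrix.smul_apply, std_apply]
          by_cases hy : y = r <;> by_cases hx : x = s <;>
            simp [hy, hx, h1, h2, h3, hasr]
        have hfin : Matrix.single r s (1:F)
            = (-(a i j))⁻¹ • (e2 * (e1 * a - a * e1) - (e1 * a - a * e1) * e2) := by
          rw [hzeq, smul_smul, inv_mul_cancel₀ (neg_ne_zero.mpr haij), one_smul]
        rw [hfin]
        exact Submodule.smul_mem _ _ hzmem

end DBHelpers

/-- For a Lie ideal `𝔫` of `ut_n(F_q)` with `supp(𝔫) = ↑λ`, one has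
`[ut_n, [ut_n, 𝔫]] = ut_{↑²λ}`. -/
theorem double_bracket_eq_upNum_two (n : ℕ) (F : Type*) [Field F] [Fintype F]
    (N : Submodule F (Matrix (Fin n) (Fin n) F))
    (hsub : (N : Set (Matrix (Fin n) (Fin n) F)) ⊆ utset n F)
    (hideal : ∀ a ∈ utset n F, ∀ b ∈ N, a * b - b * a ∈ N) :
    brSpan n F (utset n F)
        (brSpan n F (utset n F) (N : Set (Matrix (Fin n) (Fin n) F)) :
          Set (Matrix (Fin n) (Fin n) F)) =
      utOf n F (upNum n (minimalsE n (suppOf n F (N : Set (Matrix (Fin n) (Fin n) F)))) 2) := by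
  apply le_antisymm
  · have h1 : brSpan n F (utset n F) (N : Set (Matrix (Fin n) (Fin n) F)) ≤
        sptSub (upNum n (minimalsE n (suppOf n F (N : Set (Matrix (Fin n) (Fin n) F)))) 1) := by
      rw [brSpan, Submodule.span_le]
      rintro z ⟨a, ha, b, hb, rfl⟩
      refine step_mem _ 0 a b ha ?_
      rintro ⟨p1, p2⟩ hp
      by_contra hc
      exact hp (mem_up0 (N : Set (Matrix (Fin n) (Fin n) F)) hsub hb hc)
    have h2 : brSpan n F (utset n F)
        (brSpan n F (utset n F) (N : Set (Matrix (Fin n) (Fin n) F)) :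
          Set (Matrix (Fin n) (Fin n) F)) ≤
        sptSub (upNum n (minimalsE n (suppOf n F (N : Set (Matrix (Fin n) (Fin n) F)))) 2) := by
      rw [brSpan, Submodule.span_le]
      rintro z ⟨a, ha, b, hb, rfl⟩
      exact step_mem _ 1 a b ha (h1 hb)
    exact le_trans h2 (sptSub_le_utOf _)
  · rw [utOf, Submodule.span_le]
    rintro zm ⟨⟨p1, p2⟩, hp, rfl⟩
    exact std_mem_br2 N hsub ((p1:ℕ) + n) p1 p2 hp (by omega)


end Paper
end

section
/- Let N be a normal subgroup of UT_n(F_q) and let λ be the set of minimal elements of supp(N) (the set of positions (i,j), i<j, where some element of N has a nonzero entry). Then the double commutator subgroup [UT_n(F_q), [UT_n(F_q), N]] equals UT_{↑²λ} = 1 + ut_{↑²λ}, the group of unipotent matrices whose strictly-upper-triangular part is supported on ↑²λ. -/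
open Matrix BigOperators

namespace Paper

variable (n : ℕ) (F : Type*) [Field F]

/-- A subset of a monoid which is a subgroup. -/
def IsSubgroupSet {M : Type*} [Monoid M] (S : Set M) : Prop :=
  (1 : M) ∈ S ∧ (∀ a ∈ S, ∀ b ∈ S, a * b ∈ S) ∧ ∀ a ∈ S, ∃ b ∈ S, a * b = 1 ∧ b * a = 1

/-- The set of group commutators `[g, h] = g⁻¹ h⁻¹ g h` with `g ∈ G`, `h ∈ H`. -/
def commSet {M : Type*} [Monoid M] (G H : Set M) : Set M :=
  {z | ∃ g ∈ G, ∃ h ∈ H, ∃ g' h' : M,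
    g * g' = 1 ∧ g' * g = 1 ∧ h * h' = 1 ∧ h' * h = 1 ∧ z = g' * h' * g * h}

/-- The commutator subgroup `[G, H]`: the smallest subgroup containing all commutators. -/
def commClosure {M : Type*} [Monoid M] (G H : Set M) : Set M :=
  ⋂₀ {S | IsSubgroupSet S ∧ commSet G H ⊆ S}


section Aux
variable {n : ℕ} {F : Type*} [Field F]

/-- support containment predicate -/
def sIn (S : Set (Fin n × Fin n)) (x : Matrix (Fin n) (Fin n) F) : Prop :=
  ∀ i j : Fin n, (i, j) ∉ S → x i j = 0

/-- the strict upper positions -/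
def LTs (n : ℕ) : Set (Fin n × Fin n) := {p | p.1 < p.2}

lemma sIn.mono {S T : Set (Fin n × Fin n)} (h : S ⊆ T) {x : Matrix (Fin n) (Fin n) F}
    (hx : sIn S x) : sIn T x := fun i j hij => hx i j (fun hS => hij (h hS))

lemma sIn_zero (S : Set (Fin n × Fin n)) : sIn S (0 : Matrix (Fin n) (Fin n) F) :=
  fun _ _ _ => rfl

lemma sIn.add {S : Set (Fin n × Fin n)} {x y : Matrix (Fin n) (Fin n) F}
    (hx : sIn S x) (hy : sIn S y) : sIn S (x + y) := by
  intro i j h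
  simp [Matrix.add_apply, hx i j h, hy i j h]

lemma sIn.neg {S : Set (Fin n × Fin n)} {x : Matrix (Fin n) (Fin n) F}
    (hx : sIn S x) : sIn S (-x) := by
  intro i j h
  simp [Matrix.neg_apply, hx i j h]

lemma sIn.sub {S : Set (Fin n × Fin n)} {x y : Matrix (Fin n) (Fin n) F}
    (hx : sIn S x) (hy : sIn S y) : sIn S (x - y) := by
  intro i j h
  simp [Matrix.sub_apply, hx i j h, hy i j h]

lemma sIn.mul {A B C : Set (Fin n × Fin n)}
    (hC : ∀ i k j : Fin n, (i, k) ∈ A → (k, j) ∈ B → (i, j) ∈ C)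
    {x y : Matrix (Fin n) (Fin n) F} (hx : sIn A x) (hy : sIn B y) :
    sIn C (x * y) := by
  intro i j hij
  rw [Matrix.mul_apply]
  apply Finset.sum_eq_zero
  intro k _
  by_cases h1 : (i, k) ∈ A
  · by_cases h2 : (k, j) ∈ B
    · exact absurd (hC i k j h1 h2) hij
    · rw [hy k j h2, mul_zero]
  · rw [hx i k h1, zero_mul]

lemma sIn_empty {x : Matrix (Fin n) (Fin n) F} (hx : sIn (∅ : Set (Fin n × Fin n)) x) :
    x = 0 := by
  ext i j; exact hx i j (by simp)

lemma sIn_sum {S : Set (Fin n × Fin n)} {ι : Type*} {t : Finset ι}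
    {f : ι → Matrix (Fin n) (Fin n) F} (h : ∀ i ∈ t, sIn S (f i)) :
    sIn S (∑ i ∈ t, f i) := by
  classical
  induction t using Finset.induction_on with
  | empty => simpa using sIn_zero S
  | insert _ _ hnotmem ih =>
    rw [Finset.sum_insert hnotmem]
    exact (h _ (Finset.mem_insert_self _ _)).add (ih fun i hi => h i (Finset.mem_insert_of_mem hi))

lemma sIn_pow {x : Matrix (Fin n) (Fin n) F} (hx : sIn (LTs n) x) (k : ℕ) :
    sIn {p : Fin n × Fin n | (p.1 : ℕ) + k ≤ (p.2 : ℕ)} (x ^ k) := by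
  induction k with
  | zero =>
    intro i j hij
    simp only [Set.mem_setOf_eq, add_zero, not_le] at hij
    simp [pow_zero, Matrix.one_apply, (Fin.lt_def.mpr hij).ne']
  | succ k ih =>
    rw [pow_succ]
    refine sIn.mul (fun i m j him hmj => ?_) ih hx
    simp only [Set.mem_setOf_eq] at *
    have : (m:ℕ) < (j:ℕ) := hmj
    omega

lemma sIn_pow_n {x : Matrix (Fin n) (Fin n) F} (hx : sIn (LTs n) x) : x ^ n = 0 := by
  ext i j
  have := sIn_pow hx n i j (by simp only [Set.mem_setOf_eq, not_le]; exact lt_of_lt_of_le j.isLt (by omega))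
  simp [this]

/-- geometric-series inverse of `1 + x` -/
def ginv (x : Matrix (Fin n) (Fin n) F) : Matrix (Fin n) (Fin n) F :=
  ∑ i ∈ Finset.range n, (-x) ^ i

lemma ginv_mul {x : Matrix (Fin n) (Fin n) F} (hx : sIn (LTs n) x) :
    ginv x * (1 + x) = 1 ∧ (1 + x) * ginv x = 1 := by
  have hxn : (-x) ^ n = 0 := by
    rw [neg_pow, sIn_pow_n hx, mul_zero]
  have h1 : ginv x * ((-x) - 1) = (-x) ^ n - 1 := geom_sum_mul (-x) n
  have h2 : ((-x) - 1) * ginv x = (-x) ^ n - 1 := mul_geom_sum (-x) n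
  rw [hxn] at h1 h2
  constructor
  · have := congrArg (fun y => -y) h1
    simp only [zero_sub, neg_neg] at this
    calc ginv x * (1 + x) = -(ginv x * (-x - 1)) := by noncomm_ring
    _ = 1 := by rw [h1]; simp
  · calc (1 + x) * ginv x = -((-x - 1) * ginv x) := by noncomm_ring
    _ = 1 := by rw [h2]; simp

lemma sIn_ginv_sub_one {S : Set (Fin n × Fin n)} {x : Matrix (Fin n) (Fin n) F}
    (hx : sIn S x) (hS : S ⊆ LTs n)
    (hcol : ∀ i k j : Fin n, (i, k) ∈ S → (k : ℕ) ≤ (j : ℕ) → (i, j) ∈ S) :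
    sIn S (ginv x - 1) := by
  rcases Nat.eq_zero_or_pos n with h0 | hpos
  · intro i j _
    exact absurd i.isLt (by omega)
  · obtain ⟨m, rfl⟩ : ∃ m, n = m + 1 := ⟨n - 1, by omega⟩
    have hgeom : ginv x - 1 = (-x) * (∑ i ∈ Finset.range m, (-x) ^ i) := by
      unfold ginv
      rw [geom_sum_succ]
      abel
    rw [hgeom]
    refine sIn.mul (B := {p | (p.1 : ℕ) ≤ (p.2 : ℕ)})
      (fun i k j hik hkj => hcol i k j hik hkj) hx.neg (sIn_sum ?_)
    intro i _
    refine (sIn_pow (hx.mono hS).neg i).mono ?_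
    intro p hp
    simp only [Set.mem_setOf_eq] at *
    omega

/-- the pattern set of unipotent matrices -/
def Gs (S : Set (Fin n × Fin n)) : Set (Matrix (Fin n) (Fin n) F) := {g | sIn S (g - 1)}

lemma inv_unique {M : Type*} [Monoid M] {a b c : M} (h1 : a * b = 1) (h2 : c * a = 1) : c = b :=
  left_inv_eq_right_inv h2 h1

lemma mem_UTset_iff {g : Matrix (Fin n) (Fin n) F} : g ∈ UTset n F ↔ sIn (LTs n) (g - 1) := by
  constructor
  · rintro ⟨hlow, hdiag⟩ i j hij
    simp only [LTs, Set.mem_setOf_eq, not_lt] at hij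
    rcases eq_or_lt_of_le hij with h | h
    · subst h
      simp [Matrix.sub_apply, Matrix.one_apply, hdiag]
    · simp [Matrix.sub_apply, Matrix.one_apply, hlow i j h, h.ne']
  · intro h
    constructor
    · intro i j hji
      have := h i j (by simp [LTs]; omega)
      simpa [Matrix.sub_apply, Matrix.one_apply, hji.ne'] using this
    · intro i
      have := h i i (by simp [LTs])
      simp only [Matrix.sub_apply, Matrix.one_apply_eq, sub_eq_zero] at this
      exact this

lemma sIn_comp_LT : ∀ i k j : Fin n, (i, k) ∈ LTs n → (k, j) ∈ LTs n → (i, j) ∈ LTs n := by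
  intro i k j h1 h2
  simp only [LTs, Set.mem_setOf_eq] at *
  exact lt_trans h1 h2

lemma sIn_col_LT : ∀ i k j : Fin n, (i, k) ∈ LTs n → (k : ℕ) ≤ (j : ℕ) → (i, j) ∈ LTs n := by
  intro i k j h1 h2
  simp only [LTs, Set.mem_setOf_eq, Fin.lt_def] at *
  omega

/-- invertibility inside a pattern group -/
lemma Gs_inv {S : Set (Fin n × Fin n)} (hS : S ⊆ LTs n)
    (hcol : ∀ i k j : Fin n, (i, k) ∈ S → (k : ℕ) ≤ (j : ℕ) → (i, j) ∈ S)
    {g : Matrix (Fin n) (Fin n) F} (hg : g ∈ Gs S) :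
    ∃ b ∈ (Gs S : Set (Matrix (Fin n) (Fin n) F)), g * b = 1 ∧ b * g = 1 := by
  have hx : sIn S (g - 1) := hg
  have hxy : g = 1 + (g - 1) := by abel
  have h2 := ginv_mul (hx.mono hS)
  have e : (1 : Matrix (Fin n) (Fin n) F) + (g - 1) = g := by abel
  rw [e] at h2
  exact ⟨ginv (g - 1), sIn_ginv_sub_one hx hS hcol, h2.2, h2.1⟩

lemma Gs_isSubgroup {S : Set (Fin n × Fin n)} (hS : S ⊆ LTs n)
    (hmul : ∀ i k j : Fin n, (i, k) ∈ S → (k, j) ∈ S → (i, j) ∈ S)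
    (hcol : ∀ i k j : Fin n, (i, k) ∈ S → (k : ℕ) ≤ (j : ℕ) → (i, j) ∈ S) :
    IsSubgroupSet (Gs S : Set (Matrix (Fin n) (Fin n) F)) := by
  refine ⟨by simpa [Gs] using sIn_zero S, ?_, ?_⟩
  · intro a ha b hb
    have : a * b - 1 = (a - 1) * (b - 1) + (a - 1) + (b - 1) := by noncomm_ring
    show sIn S (a * b - 1)
    rw [this]
    exact ((sIn.mul hmul ha hb).add ha).add hb
  · intro a ha
    exact Gs_inv hS hcol ha

lemma UTset_eq_Gs : UTset n F = Gs (LTs n) := Set.ext fun _ => mem_UTset_iff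

lemma UT_inv_mem {g g' : Matrix (Fin n) (Fin n) F} (hg : g ∈ UTset n F)
    (h1 : g * g' = 1) (h2 : g' * g = 1) : g' ∈ UTset n F := by
  rw [UTset_eq_Gs] at *
  obtain ⟨b, hb, hgb, _⟩ := Gs_inv (le_refl _) sIn_col_LT hg
  rwa [inv_unique hgb h2]

end Aux

section Up
variable {n : ℕ} {F : Type*} [Field F] {lam : Set (Fin n × Fin n)}
variable (hlam : ∀ p ∈ lam, p.1 < p.2)

lemma mem_upNum {q : Fin n × Fin n} {k : ℕ} :
    q ∈ upNum n lam k ↔ ((q.1 : ℕ) < (q.2 : ℕ) ∧ ∃ p ∈ lam,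
      (((q.1 : ℕ) ≤ (p.1 : ℕ)) ∧ ((p.2 : ℕ) ≤ (q.2 : ℕ))) ∧
        (p.2 : ℕ) - (p.1 : ℕ) + k ≤ (q.2 : ℕ) - (q.1 : ℕ)) := by
  simp only [upNum, edgeLe, Set.mem_setOf_eq, Fin.lt_def, Fin.le_def]

lemma mem_LTs {q : Fin n × Fin n} : q ∈ LTs n ↔ (q.1 : ℕ) < (q.2 : ℕ) := by
  simp only [LTs, Set.mem_setOf_eq, Fin.lt_def]

lemma upNum_subset_LT (k : ℕ) : upNum n lam k ⊆ LTs n := fun p hp => hp.1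

lemma upNum_antitone (k : ℕ) : upNum n lam (k + 1) ⊆ upNum n lam k := by
  intro q hq
  rw [mem_upNum] at *
  obtain ⟨hq1, p, hp, hle, hh⟩ := hq
  exact ⟨hq1, p, hp, hle, by omega⟩

include hlam

lemma lam_lt {p : Fin n × Fin n} (hp : p ∈ lam) : (p.1 : ℕ) < (p.2 : ℕ) := hlam p hp

lemma upNum_comp_left (k : ℕ) :
    ∀ i m j : Fin n, (i, m) ∈ LTs n → (m, j) ∈ upNum n lam k → (i, j) ∈ upNum n lam (k + 1) := by
  intro i m j him hmj
  rw [mem_LTs] at him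
  rw [mem_upNum] at *
  obtain ⟨h1, p, hp, hle, hh⟩ := hmj
  have := lam_lt hlam hp
  simp only at *
  exact ⟨by omega, p, hp, ⟨by omega, by omega⟩, by omega⟩

lemma upNum_comp_right (k : ℕ) :
    ∀ i m j : Fin n, (i, m) ∈ upNum n lam k → (m, j) ∈ LTs n → (i, j) ∈ upNum n lam (k + 1) := by
  intro i m j him hmj
  rw [mem_LTs] at hmj
  rw [mem_upNum] at *
  obtain ⟨h1, p, hp, hle, hh⟩ := him
  have := lam_lt hlam hp
  simp only at *
  exact ⟨by omega, p, hp, ⟨by omega, by omega⟩, by omega⟩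

lemma upNum_comp_self (k : ℕ) :
    ∀ i m j : Fin n, (i, m) ∈ upNum n lam k → (m, j) ∈ upNum n lam k → (i, j) ∈ upNum n lam k := by
  intro i m j h1 h2
  exact upNum_antitone k (upNum_comp_right hlam k i m j h1 (upNum_subset_LT k h2))

lemma upNum_col (k : ℕ) :
    ∀ i m j : Fin n, (i, m) ∈ upNum n lam k → (m : ℕ) ≤ (j : ℕ) → (i, j) ∈ upNum n lam k := by
  intro i m j h1 h2
  rcases eq_or_lt_of_le h2 with h | h
  · rwa [show j = m from Fin.ext h.symm]
  · exact upNum_antitone k (upNum_comp_right hlam k i m j h1 (mem_LTs.mpr h))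

lemma Gs_upNum_isSubgroup (k : ℕ) :
    IsSubgroupSet (Gs (upNum n lam k) : Set (Matrix (Fin n) (Fin n) F)) :=
  Gs_isSubgroup (upNum_subset_LT k) (upNum_comp_self hlam k) (upNum_col hlam k)

/-- the key support bound for group commutators -/
lemma comm_mem_Gs {k : ℕ} {g g' h h' : Matrix (Fin n) (Fin n) F}
    (hg : g ∈ UTset n F) (hgg : g * g' = 1) (hg'g : g' * g = 1)
    (hh : h ∈ Gs (upNum n lam k)) (hhh : h * h' = 1) (hh'h : h' * h = 1) :
    g' * h' * g * h ∈ Gs (upNum n lam (k + 1)) := by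
  have hg' : g' ∈ UTset n F := UT_inv_mem hg hgg hg'g
  have hsg : sIn (LTs n) (g - 1) := mem_UTset_iff.1 hg
  have hsg' : sIn (LTs n) (g' - 1) := mem_UTset_iff.1 hg'
  have hsh : sIn (upNum n lam k) (h - 1) := hh
  have hsh' : sIn (upNum n lam k) (h' - 1) := by
    obtain ⟨b, hb, h1, h2⟩ := Gs_inv (F := F) (upNum_subset_LT k) (upNum_col hlam k) hh
    rwa [inv_unique h1 hh'h]
  show sIn (upNum n lam (k + 1)) (g' * h' * g * h - 1)
  have key : g' * h' * g * h - 1 =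
      ((g - 1) * (h - 1) - (h - 1) * (g - 1)) +
        ((g' - 1) + (h' - 1) + (g' - 1) * (h' - 1)) *
          ((g - 1) * (h - 1) - (h - 1) * (g - 1)) := by
    have e1 : g' * h' * g * h - 1 = g' * h' * (g * h - h * g) + g' * (h' * h) * g - 1 := by
      noncomm_ring
    rw [hh'h, mul_one, hg'g] at e1
    have e2 : g' * h' * (g * h - h * g) =
        (1 + ((g' - 1) + (h' - 1) + (g' - 1) * (h' - 1))) * (g * h - h * g) := by
      noncomm_ring
    have e3 : g * h - h * g = (g - 1) * (h - 1) - (h - 1) * (g - 1) := by noncomm_ring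
    rw [e1, e2, e3]
    noncomm_ring
  rw [key]
  have hA : sIn (upNum n lam (k + 1)) ((g - 1) * (h - 1) - (h - 1) * (g - 1)) :=
    (sIn.mul (upNum_comp_left hlam k) hsg hsh).sub (sIn.mul (upNum_comp_right hlam k) hsh hsg)
  have hW : sIn (LTs n) ((g' - 1) + (h' - 1) + (g' - 1) * (h' - 1)) :=
    ((hsg'.add (hsh'.mono (upNum_subset_LT k))).add
      (sIn.mul sIn_comp_LT hsg' (hsh'.mono (upNum_subset_LT k))))
  refine hA.add ((sIn.mul ?_ hW hA).mono (upNum_antitone (k + 1)))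
  exact upNum_comp_left hlam (k + 1)

end Up

section Closure
variable {M : Type*} [Monoid M]

lemma commClosure_subset_of {G H S : Set M} (h1 : IsSubgroupSet S) (h2 : commSet G H ⊆ S) :
    commClosure G H ⊆ S := fun x hx => hx S ⟨h1, h2⟩

lemma commSet_subset_closure {G H : Set M} : commSet G H ⊆ commClosure G H :=
  fun x hx S hS => hS.2 hx

lemma commSet_mono {G H H' : Set M} (h : H ⊆ H') : commSet G H ⊆ commSet G H' := by
  rintro z ⟨g, hg, hh, hmem, rest⟩
  exact ⟨g, hg, hh, h hmem, rest⟩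

lemma one_mem_commClosure {G H : Set M} : (1 : M) ∈ commClosure G H :=
  fun S hS => hS.1.1

lemma mul_mem_commClosure {G H : Set M} {x y : M} (hx : x ∈ commClosure G H)
    (hy : y ∈ commClosure G H) : x * y ∈ commClosure G H :=
  fun S hS => hS.1.2.1 x (hx S hS) y (hy S hS)

end Closure

section Supp
variable {n : ℕ} {F : Type*} [Field F]

lemma mem_utOf_iff {S : Set (Fin n × Fin n)} {x : Matrix (Fin n) (Fin n) F} :
    x ∈ utOf n F S ↔ sIn S x := by
  constructor
  · intro hx
    induction hx using Submodule.span_induction with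
    | mem x h =>
      obtain ⟨p, hp, rfl⟩ := h
      intro i j hij
      rw [Matrix.single_apply_of_ne]
      rintro ⟨rfl, rfl⟩
      exact hij hp
    | zero => exact sIn_zero S
    | add x y _ _ hx hy => exact hx.add hy
    | smul c x _ hx => intro i j h; simp [Matrix.smul_apply, hx i j h]
  · intro hx
    rw [matrix_eq_sum_single x]
    apply Submodule.sum_mem
    intro i _
    apply Submodule.sum_mem
    intro j _
    by_cases h : (i, j) ∈ S
    · have e : single i j (x i j) = (x i j) • single i j (1 : F) := by simp
      rw [e]
      exact Submodule.smul_mem _ _ (Submodule.subset_span ⟨(i, j), h, rfl⟩)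
    · rw [hx i j h, Matrix.single_zero]
      exact Submodule.zero_mem _

lemma exists_minimal {S : Set (Fin n × Fin n)} (hS : ∀ q ∈ S, q.1 < q.2) :
    ∀ p ∈ S, ∃ q ∈ minimalsE n S, edgeLe n q p := by
  suffices H : ∀ m, ∀ p ∈ S, ((p.2 : ℕ) - (p.1 : ℕ)) ≤ m →
      ∃ q ∈ minimalsE n S, edgeLe n q p by
    intro p hp; exact H _ p hp le_rfl
  intro m
  induction m with
  | zero =>
    intro p hp h
    have := hS p hp
    rw [Fin.lt_def] at this
    omega
  | succ m ih =>
    intro p hp h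
    by_cases hmin : ∀ q ∈ S, edgeLe n q p → q = p
    · exact ⟨p, ⟨hp, hmin⟩, le_refl _, le_refl _⟩
    · push_neg at hmin
      obtain ⟨q, hq, hle, hne⟩ := hmin
      have hq12 := hS q hq
      have hp12 := hS p hp
      obtain ⟨l1, l2⟩ := hle
      have hlt : ((q.2 : ℕ) - (q.1 : ℕ)) ≤ m := by
        have hor : (q.1 : ℕ) ≠ (p.1 : ℕ) ∨ (q.2 : ℕ) ≠ (p.2 : ℕ) := by
          by_contra hc
          push_neg at hc
          exact hne (Prod.ext (Fin.ext hc.1) (Fin.ext hc.2))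
        rw [Fin.le_def] at l1 l2
        rw [Fin.lt_def] at hq12 hp12
        omega
      obtain ⟨q', hq', hle'⟩ := ih q hq hlt
      exact ⟨q', hq', le_trans l1 hle'.1, le_trans hle'.2 l2⟩

variable {N : Set (Matrix (Fin n) (Fin n) F)}

lemma suppOf_lt : ∀ q ∈ suppOf n F N, q.1 < q.2 := fun _ hq => hq.1

lemma minimalsE_lt : ∀ p ∈ minimalsE n (suppOf n F N), p.1 < p.2 := fun _ hp => hp.1.1

lemma supp_subset_up0 : suppOf n F N ⊆ upNum n (minimalsE n (suppOf n F N)) 0 := by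
  intro p hp
  obtain ⟨q, hq, hle⟩ := exists_minimal suppOf_lt p hp
  have hq12 := hq.1.1
  have hp12 := hp.1
  rw [mem_upNum]
  rw [Fin.lt_def] at hq12 hp12
  obtain ⟨l1, l2⟩ := hle
  rw [Fin.le_def] at l1 l2
  exact ⟨hp12, q, hq, ⟨l1, l2⟩, by omega⟩

lemma N_subset_Gs0 (hN : IsNormalSubgroupUT n F N) :
    N ⊆ Gs (upNum n (minimalsE n (suppOf n F N)) 0) := by
  intro a ha
  show sIn _ (a - 1)
  intro i j hij
  by_cases hij2 : i < j
  · by_contra hne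
    have haij : a i j ≠ 0 := by
      rwa [Matrix.sub_apply, Matrix.one_apply_ne hij2.ne, sub_zero] at hne
    exact hij (supp_subset_up0 ⟨hij2, a, ha, haij⟩)
  · exact mem_UTset_iff.1 (hN.1 ha) i j (by rwa [LTs, Set.mem_setOf_eq])

lemma commClosure_subset_Gs (hN : IsNormalSubgroupUT n F N) {H : Set (Matrix (Fin n) (Fin n) F)}
    {k : ℕ} (hH : H ⊆ Gs (upNum n (minimalsE n (suppOf n F N)) k)) :
    commClosure (UTset n F) H ⊆ Gs (upNum n (minimalsE n (suppOf n F N)) (k + 1)) := by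
  refine commClosure_subset_of (Gs_upNum_isSubgroup minimalsE_lt (k + 1)) ?_
  rintro z ⟨g, hg, h, hh, g', h', e1, e2, e3, e4, rfl⟩
  exact comm_mem_Gs minimalsE_lt hg e1 e2 (hH hh) e3 e4

lemma D_subset_Gs2 (hN : IsNormalSubgroupUT n F N) :
    commClosure (UTset n F) (commClosure (UTset n F) N) ⊆
      Gs (upNum n (minimalsE n (suppOf n F N)) 2) :=
  commClosure_subset_Gs hN (commClosure_subset_Gs hN (N_subset_Gs0 hN))

end Supp

section Comm
variable {n : ℕ} {F : Type*} [Field F]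

lemma triple_apply (b' b : Matrix (Fin n) (Fin n) F) (p q : Fin n) (t : F) (r s : Fin n) :
    (b' * single p q t * b) r s = b' r p * t * b q s := by
  rw [Matrix.mul_apply, Finset.sum_eq_single q]
  · rw [Matrix.mul_single_apply_same]
  · intro k _ hk
    rw [Matrix.mul_single_apply_of_ne t p q r k hk, zero_mul]
  · intro h
    exact absurd (Finset.mem_univ q) h

lemma std_conj_zero {p q : Fin n} (hpq : p ≠ q) {M : Matrix (Fin n) (Fin n) F}
    (hM : M q p = 0) (t u : F) :
    single p q t * M * single p q u = 0 := by
  ext r s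
  rw [Matrix.zero_apply]
  by_cases hs : s = q
  · subst hs
    rw [Matrix.mul_single_apply_same]
    by_cases hr : r = p
    · subst hr
      rw [Matrix.single_mul_apply_same, hM, mul_zero, zero_mul]
    · rw [Matrix.single_mul_apply_of_ne t p s r p hr, zero_mul]
  · rw [Matrix.mul_single_apply_of_ne u p q r s hs]

lemma std_sq_zero {p q : Fin n} (hpq : p ≠ q) (t u : F) :
    single p q t * single p q u = (0 : Matrix (Fin n) (Fin n) F) := by
  have h := std_conj_zero (M := (1 : Matrix (Fin n) (Fin n) F)) hpq
    (Matrix.one_apply_ne (Ne.symm hpq)) t u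
  rwa [mul_one] at h

lemma std_inv {p q : Fin n} (hpq : p ≠ q) (t : F) :
    (1 + single p q t) * (1 - single p q t) = 1 ∧
      (1 - single p q t) * (1 + single p q t) = 1 := by
  have h0 := std_sq_zero (F := F) hpq t t
  constructor
  · have e : (1 + single p q t) * (1 - single p q t) =
        1 - single p q t * single p q t := by noncomm_ring
    rw [e, h0, sub_zero]
  · have e : (1 - single p q t) * (1 + single p q t) =
        1 - single p q t * single p q t := by noncomm_ring
    rw [e, h0, sub_zero]

lemma one_add_std_mem_UT {p q : Fin n} (hpq : p < q) (t : F) :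
    1 + single p q t ∈ UTset n F := by
  rw [mem_UTset_iff]
  have e : (1 + single p q t) - 1 = single p q t := by abel
  rw [e]
  intro i j hij
  rw [Matrix.single_apply_of_ne]
  rintro ⟨rfl, rfl⟩
  exact hij hpq

lemma comm_eq {p q : Fin n} (hpq : p ≠ q) {b b' : Matrix (Fin n) (Fin n) F}
    (hb'b : b' * b = 1) (hb'qp : b' q p = 0) (t : F) :
    (1 - single p q t) * b' * (1 + single p q t) * b
      = 1 + (b' * single p q t * b - single p q t) := by
  have h0 : single p q t * b' * single p q t = 0 :=
    std_conj_zero hpq hb'qp t t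
  have expand : (1 - single p q t) * b' * (1 + single p q t) * b =
      b' * b + b' * single p q t * b - single p q t * (b' * b)
        - (single p q t * b' * single p q t) * b := by noncomm_ring
  rw [expand, h0, hb'b, zero_mul, mul_one, sub_zero]
  abel

lemma comm_mem {H : Set (Matrix (Fin n) (Fin n) F)} {p q : Fin n} (hpq : p < q) (t : F)
    {b b' : Matrix (Fin n) (Fin n) F} (hb : b ∈ H) (hbb : b * b' = 1) (hb'b : b' * b = 1) :
    (1 - single p q t) * b' * (1 + single p q t) * b
      ∈ commSet (UTset n F) H :=
  ⟨1 + single p q t, one_add_std_mem_UT hpq t, b, hb,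
    1 - single p q t, b', (std_inv hpq.ne t).1, (std_inv hpq.ne t).2, hbb, hb'b, rfl⟩

lemma m1_supp {p q : Fin n} (t : F) {a a' : Matrix (Fin n) (Fin n) F}
    (ha : a ∈ UTset n F) (ha' : a' ∈ UTset n F) :
    sIn {z : Fin n × Fin n | (z.1 : ℕ) ≤ (p : ℕ) ∧ (q : ℕ) ≤ (z.2 : ℕ)}
      (a' * single p q t * a - single p q t) := by
  intro x y hxy
  simp only [Set.mem_setOf_eq, not_and, not_le] at hxy
  rw [Matrix.sub_apply, triple_apply]
  by_cases h1 : (x : ℕ) ≤ (p : ℕ)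
  · have h2 : (y : ℕ) < (q : ℕ) := hxy h1
    rw [ha.1 q y (Fin.lt_def.mpr h2), mul_zero, Matrix.single_apply_of_ne, sub_zero]
    rintro ⟨rfl, rfl⟩
    omega
  · rw [ha'.1 x p (Fin.lt_def.mpr (by omega)), zero_mul, zero_mul,
      Matrix.single_apply_of_ne, sub_zero]
    rintro ⟨rfl, rfl⟩
    omega

lemma RC_mul_zero {p q : Fin n} (hpq : (p : ℕ) < (q : ℕ)) {m m' : Matrix (Fin n) (Fin n) F}
    (hm : sIn {z : Fin n × Fin n | (z.1 : ℕ) ≤ (p : ℕ) ∧ (q : ℕ) ≤ (z.2 : ℕ)} m)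
    (hm' : sIn {z : Fin n × Fin n | (z.1 : ℕ) ≤ (p : ℕ) ∧ (q : ℕ) ≤ (z.2 : ℕ)} m') :
    m * m' = 0 := by
  apply sIn_empty
  refine sIn.mul (C := (∅ : Set (Fin n × Fin n))) ?_ hm hm'
  rintro i k j h1 h2
  simp only [Set.mem_setOf_eq] at h1 h2
  omega

end Comm

section Second
variable {n : ℕ} {F : Type*} [Field F] {N : Set (Matrix (Fin n) (Fin n) F)}

lemma second_comm_row {p1 q1 p2 q2 : Fin n} (hp1q1 : (p1 : ℕ) < (q1 : ℕ)) (hp2q2 : p2 < q2)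
    (hp1q2 : (p1 : ℕ) < (q2 : ℕ)) (u : F) {m1 : Matrix (Fin n) (Fin n) F}
    (hRC : sIn {z : Fin n × Fin n | (z.1 : ℕ) ≤ (p1 : ℕ) ∧ (q1 : ℕ) ≤ (z.2 : ℕ)} m1)
    (hc1 : (1 + m1) ∈ commSet (UTset n F) N) :
    ∃ w : Matrix (Fin n) (Fin n) F,
      (1 + w) ∈ commSet (UTset n F) (commSet (UTset n F) N) ∧
      (∀ x y : Fin n, w x y = if y = q2 then -(m1 x p2 * u) else 0) := by
  have hm1sq : m1 * m1 = 0 := RC_mul_zero hp1q1 hRC hRC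
  have hinv1 : (1 + m1) * (1 - m1) = 1 := by
    have e : (1 + m1) * (1 - m1) = 1 - m1 * m1 := by noncomm_ring
    rw [e, hm1sq, sub_zero]
  have hinv2 : (1 - m1) * (1 + m1) = 1 := by
    have e : (1 - m1) * (1 + m1) = 1 - m1 * m1 := by noncomm_ring
    rw [e, hm1sq, sub_zero]
  have hq2row : ∀ y : Fin n, m1 q2 y = 0 := fun y =>
    hRC q2 y (by simp only [Set.mem_setOf_eq, not_and, not_le]; intro h; omega)
  have hq2p2 : (1 - m1) q2 p2 = 0 := by
    rw [Matrix.sub_apply, Matrix.one_apply_ne hp2q2.ne', hq2row p2,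
      sub_zero]
  refine ⟨(1 - m1) * single p2 q2 u * (1 + m1) - single p2 q2 u, ?_, ?_⟩
  · have e := comm_eq hp2q2.ne hinv2 hq2p2 u
    rw [← e]
    exact comm_mem hp2q2 u hc1 hinv1 hinv2
  · intro x y
    rw [Matrix.sub_apply, triple_apply]
    by_cases hy : y = q2
    · subst hy
      rw [if_pos rfl]
      have hc1yy : (1 + m1) y y = 1 := by
        rw [Matrix.add_apply, Matrix.one_apply_eq, hq2row y, add_zero]
      rw [hc1yy, Matrix.sub_apply]
      by_cases hx : x = p2
      · subst hx
        rw [Matrix.one_apply_eq, Matrix.single_apply_same]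
        ring
      · rw [Matrix.one_apply_ne hx, Matrix.single_apply_of_ne]
        · ring
        · rintro ⟨rfl, -⟩
          exact hx rfl
    · rw [if_neg hy]
      have hc1y : (1 + m1) q2 y = 0 := by
        rw [Matrix.add_apply, Matrix.one_apply_ne (Ne.symm hy), hq2row y, add_zero]
      rw [hc1y, mul_zero, Matrix.single_apply_of_ne, sub_zero]
      rintro ⟨-, rfl⟩
      exact hy rfl

lemma second_comm_col {p1 q1 p2 q2 : Fin n} (hp1q1 : (p1 : ℕ) < (q1 : ℕ)) (hp2q2 : p2 < q2)
    (hp2q1 : (p2 : ℕ) < (q1 : ℕ)) (u : F) {m1 : Matrix (Fin n) (Fin n) F}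
    (hRC : sIn {z : Fin n × Fin n | (z.1 : ℕ) ≤ (p1 : ℕ) ∧ (q1 : ℕ) ≤ (z.2 : ℕ)} m1)
    (hc1 : (1 + m1) ∈ commSet (UTset n F) N) :
    ∃ w : Matrix (Fin n) (Fin n) F,
      (1 + w) ∈ commSet (UTset n F) (commSet (UTset n F) N) ∧
      (∀ x y : Fin n, w x y = if x = p2 then m1 q2 y * u else 0) := by
  have hm1sq : m1 * m1 = 0 := RC_mul_zero hp1q1 hRC hRC
  have hinv1 : (1 + m1) * (1 - m1) = 1 := by
    have e : (1 + m1) * (1 - m1) = 1 - m1 * m1 := by noncomm_ring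
    rw [e, hm1sq, sub_zero]
  have hinv2 : (1 - m1) * (1 + m1) = 1 := by
    have e : (1 - m1) * (1 + m1) = 1 - m1 * m1 := by noncomm_ring
    rw [e, hm1sq, sub_zero]
  have hp2col : ∀ x : Fin n, m1 x p2 = 0 := fun x =>
    hRC x p2 (by simp only [Set.mem_setOf_eq, not_and, not_le]; intro h; omega)
  have hq2p2 : (1 - m1) q2 p2 = 0 := by
    rw [Matrix.sub_apply, Matrix.one_apply_ne hp2q2.ne', hp2col q2,
      sub_zero]
  refine ⟨(1 - m1) * single p2 q2 u * (1 + m1) - single p2 q2 u, ?_, ?_⟩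
  · have e := comm_eq hp2q2.ne hinv2 hq2p2 u
    rw [← e]
    exact comm_mem hp2q2 u hc1 hinv1 hinv2
  · intro x y
    rw [Matrix.sub_apply, triple_apply]
    by_cases hx : x = p2
    · subst hx
      rw [if_pos rfl]
      have e1 : (1 - m1) x x = 1 := by
        rw [Matrix.sub_apply, Matrix.one_apply_eq, hp2col x, sub_zero]
      rw [e1, Matrix.add_apply]
      by_cases hy : y = q2
      · subst hy
        rw [Matrix.one_apply_eq, Matrix.single_apply_same]
        ring
      · rw [Matrix.one_apply_ne (Ne.symm hy), Matrix.single_apply_of_ne]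
        · ring
        · rintro ⟨-, rfl⟩
          exact hy rfl
    · rw [if_neg hx]
      have e1 : (1 - m1) x p2 = 0 := by
        rw [Matrix.sub_apply, Matrix.one_apply_ne hx, hp2col x, sub_zero]
      rw [e1, zero_mul, zero_mul, Matrix.single_apply_of_ne, sub_zero]
      rintro ⟨rfl, -⟩
      exact hx rfl

end Second

section ExistsW
variable {n : ℕ} {F : Type*} [Field F] {N : Set (Matrix (Fin n) (Fin n) F)}

/-- row + reversed-column measure -/
def meas {n : ℕ} (p : Fin n × Fin n) : ℕ := (p.1 : ℕ) + (n - (p.2 : ℕ))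

lemma sum_single {f : Fin n → F} (i : Fin n) (h : ∀ k, k ≠ i → f k = 0) :
    ∑ k, f k = f i :=
  Finset.sum_eq_single i (fun k _ hk => h k hk) (fun h' => absurd (Finset.mem_univ i) h')

lemma sum_double {f : Fin n → F} {i j : Fin n} (hij : i ≠ j)
    (h : ∀ k, k ≠ i → k ≠ j → f k = 0) : ∑ k, f k = f i + f j := by
  classical
  have e := Finset.sum_subset (Finset.subset_univ ({i, j} : Finset (Fin n)))
    (fun k _ hk => by
      simp only [Finset.mem_insert, Finset.mem_singleton, not_or] at hk
      exact h k hk.1 hk.2)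
  rw [← e, Finset.sum_insert (by simp [hij]), Finset.sum_singleton]

lemma inv_entry_j {a a' : Matrix (Fin n) (Fin n) F} (haUT : a ∈ UTset n F)
    (ha'UT : a' ∈ UTset n F) (ha'a : a' * a = 1) {i j : Fin n} (hij : (i : ℕ) < (j : ℕ))
    (hK : ∀ u v : Fin n, (i : ℕ) ≤ (u : ℕ) → (v : ℕ) ≤ (j : ℕ) → (u : ℕ) < (v : ℕ) →
       ¬((u : ℕ) = (i : ℕ) ∧ (v : ℕ) = (j : ℕ)) → a u v = 0) :
    a' i j = -(a i j) ∧ ∀ u : Fin n, (i : ℕ) < (u : ℕ) → (u : ℕ) < (j : ℕ) → a' u j = 0 := by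
  have hji : i ≠ j := fun h => by rw [h] at hij; omega
  constructor
  · have h1 : ∑ k, a' i k * a k j = 0 := by
      rw [← Matrix.mul_apply, ha'a, Matrix.one_apply_ne hji]
    have h2 : ∑ k, a' i k * a k j = a' i i * a i j + a' i j * a j j := by
      apply sum_double hji
      intro k hki hkj
      rcases lt_trichotomy ((k : ℕ)) ((i : ℕ)) with h | h | h
      · rw [ha'UT.1 i k (Fin.lt_def.mpr h), zero_mul]
      · exact absurd (Fin.ext h) hki
      · rcases lt_trichotomy ((k : ℕ)) ((j : ℕ)) with h' | h' | h'
        · rw [hK k j (le_of_lt h) le_rfl h' (fun hc => by omega), mul_zero]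
        · exact absurd (Fin.ext h') hkj
        · rw [haUT.1 k j (Fin.lt_def.mpr h'), mul_zero]
    rw [h2, ha'UT.2 i, haUT.2 j, one_mul, mul_one] at h1
    linear_combination h1
  · intro u hu1 hu2
    have huj : u ≠ j := fun h => by rw [h] at hu2; omega
    have h1 : ∑ k, a' u k * a k j = 0 := by
      rw [← Matrix.mul_apply, ha'a, Matrix.one_apply_ne huj]
    have h2 : ∑ k, a' u k * a k j = a' u j * a j j := by
      apply sum_single j
      intro k hk
      rcases lt_trichotomy ((k : ℕ)) ((u : ℕ)) with h | h | h
      · rw [ha'UT.1 u k (Fin.lt_def.mpr h), zero_mul]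
      · rcases lt_trichotomy ((k : ℕ)) ((j : ℕ)) with h' | h' | h'
        · rw [hK k j (by omega) le_rfl h' (fun hc => by omega), mul_zero]
        · exact absurd (Fin.ext h') hk
        · rw [haUT.1 k j (Fin.lt_def.mpr h'), mul_zero]
      · rcases lt_trichotomy ((k : ℕ)) ((j : ℕ)) with h' | h' | h'
        · rw [hK k j (by omega) le_rfl h' (fun hc => by omega), mul_zero]
        · exact absurd (Fin.ext h') hk
        · rw [haUT.1 k j (Fin.lt_def.mpr h'), mul_zero]
    rw [h2, haUT.2 j, mul_one] at h1
    exact h1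

end ExistsW

section CaseA
variable {n : ℕ} {F : Type*} [Field F] {N : Set (Matrix (Fin n) (Fin n) F)}

lemma exists_w_caseA {r s i j : Fin n}
    (hijlam : (i, j) ∈ minimalsE n (suppOf n F N))
    {a a' : Matrix (Fin n) (Fin n) F} (haN : a ∈ N) (haij : a i j ≠ 0)
    (haUT : a ∈ UTset n F) (ha'UT : a' ∈ UTset n F) (haa' : a * a' = 1) (ha'a : a' * a = 1)
    (hri : (r : ℕ) < (i : ℕ)) (hjs : (j : ℕ) < (s : ℕ)) (hij : (i : ℕ) < (j : ℕ))
    (hht : ((j : ℕ) - (i : ℕ)) + 2 ≤ (s : ℕ) - (r : ℕ)) (t0 : F) :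
    ∃ w : Matrix (Fin n) (Fin n) F,
      (1 + w) ∈ commSet (UTset n F) (commSet (UTset n F) N) ∧
        w * w = 0 ∧ w r s = t0 ∧
        ∀ x y : Fin n, w x y ≠ 0 →
          ((x, y) ∈ upNum n (minimalsE n (suppOf n F N)) 2 ∧
            meas (x, y) ≤ meas (r, s) ∧ (meas (x, y) = meas (r, s) → x = r ∧ y = s)) := by
  classical
  have hrs1 : (r : ℕ) < (s : ℕ) := by omega
  have hrine : r ≠ i := fun h => by rw [h] at hri; omega
  set u : F := -(t0 / a i j) with hu
  have hm1 := m1_supp (p := r) (q := i) (1 : F) haUT ha'UT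
  have hc1mem : (1 + (a' * single r i 1 * a - single r i 1))
      ∈ commSet (UTset n F) N := by
    rw [← comm_eq hrine ha'a (ha'UT.1 i r (Fin.lt_def.mpr hri)) 1]
    exact comm_mem (Fin.lt_def.mpr hri) 1 haN haa' ha'a
  obtain ⟨w, hwmem, hwents⟩ := second_comm_row (N := N) hri (Fin.lt_def.mpr hjs)
    (by omega) u hm1 hc1mem
  have hm1xj : ∀ x : Fin n,
      ((a' * single r i 1 * a - single r i 1 :
        Matrix (Fin n) (Fin n) F)) x j = a' x r * a i j := by
    intro x
    rw [Matrix.sub_apply, triple_apply, Matrix.single_apply_of_ne, sub_zero, mul_one]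
    rintro ⟨-, hc⟩
    have h2 := congrArg Fin.val hc
    omega
  have hw : ∀ x y : Fin n, w x y = if y = s then -(a' x r * a i j * u) else 0 := by
    intro x y
    rw [hwents x y]
    by_cases hy : y = s
    · rw [if_pos hy, if_pos hy, hm1xj x]
    · rw [if_neg hy, if_neg hy]
  have hsupp : ∀ x y : Fin n, w x y ≠ 0 → (x : ℕ) ≤ (r : ℕ) ∧ y = s := by
    intro x y hxy
    rw [hw] at hxy
    by_cases hy : y = s
    · refine ⟨?_, hy⟩
      by_contra hc
      rw [if_pos hy, ha'UT.1 x r (Fin.lt_def.mpr (by omega)), zero_mul, zero_mul,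
        neg_zero] at hxy
      exact hxy rfl
    · rw [if_neg hy] at hxy
      exact absurd rfl hxy
  refine ⟨w, hwmem, ?_, ?_, ?_⟩
  · refine RC_mul_zero (p := r) (q := s) hrs1 ?_ ?_ <;>
    · intro x y hxy
      by_contra hne
      obtain ⟨h1, h2⟩ := hsupp x y hne
      have h3 : (y : ℕ) = (s : ℕ) := by rw [h2]
      simp only [Set.mem_setOf_eq] at hxy
      exact hxy ⟨h1, by omega⟩
  · rw [hw, if_pos rfl, ha'UT.2 r, one_mul, hu]
    field_simp
  · intro x y hxy
    obtain ⟨hxr, hys⟩ := hsupp x y hxy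
    have hys' : (y : ℕ) = (s : ℕ) := by rw [hys]
    refine ⟨?_, ?_, ?_⟩
    · rw [mem_upNum]
      exact ⟨(by omega : (x : ℕ) < (y : ℕ)), (i, j), hijlam,
        ⟨(by omega : (x : ℕ) ≤ (i : ℕ)), (by omega : (j : ℕ) ≤ (y : ℕ))⟩,
        (by omega : (j : ℕ) - (i : ℕ) + 2 ≤ (y : ℕ) - (x : ℕ))⟩
    · exact (by omega : (x : ℕ) + (n - (y : ℕ)) ≤ (r : ℕ) + (n - (s : ℕ)))
    · intro hme
      have hme' : (x : ℕ) + (n - (y : ℕ)) = (r : ℕ) + (n - (s : ℕ)) := hme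
      have hsn : (s : ℕ) < n := s.isLt
      exact ⟨Fin.ext (by omega), hys⟩

lemma exists_w_caseB {r s i j : Fin n}
    (hijlam : (i, j) ∈ minimalsE n (suppOf n F N))
    {a a' : Matrix (Fin n) (Fin n) F} (haN : a ∈ N) (haij : a i j ≠ 0)
    (haUT : a ∈ UTset n F) (ha'UT : a' ∈ UTset n F) (haa' : a * a' = 1) (ha'a : a' * a = 1)
    (hri : (r : ℕ) = (i : ℕ)) (hij : (i : ℕ) < (j : ℕ)) (hjs : (j : ℕ) < (s : ℕ))
    (hht : ((j : ℕ) - (i : ℕ)) + 2 ≤ (s : ℕ) - (r : ℕ))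
    (ha'ij : a' i j = -(a i j))
    (ha'uj : ∀ u : Fin n, (i : ℕ) < (u : ℕ) → (u : ℕ) < (j : ℕ) → a' u j = 0)
    (t0 : F) :
    ∃ w : Matrix (Fin n) (Fin n) F,
      (1 + w) ∈ commSet (UTset n F) (commSet (UTset n F) N) ∧
        w * w = 0 ∧ w r s = t0 ∧
        ∀ x y : Fin n, w x y ≠ 0 →
          ((x, y) ∈ upNum n (minimalsE n (suppOf n F N)) 2 ∧
            meas (x, y) ≤ meas (r, s) ∧ (meas (x, y) = meas (r, s) → x = r ∧ y = s)) := by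
  classical
  have hs2 : (j : ℕ) + 1 < (s : ℕ) := by omega
  have hsn : (s : ℕ) < n := s.isLt
  set j1 : Fin n := ⟨(j : ℕ) + 1, by omega⟩ with hj1
  have hj1v : (j1 : ℕ) = (j : ℕ) + 1 := rfl
  set u : F := t0 / a i j with hu
  have hjne : j ≠ j1 := fun h => by have := congrArg Fin.val h; omega
  have hm1 := m1_supp (p := j) (q := j1) (1 : F) haUT ha'UT
  have hc1mem : (1 + (a' * single j j1 1 * a - single j j1 1))
      ∈ commSet (UTset n F) N := by
    rw [← comm_eq hjne ha'a (ha'UT.1 j1 j (Fin.lt_def.mpr (by omega))) 1]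
    exact comm_mem (Fin.lt_def.mpr (by omega)) 1 haN haa' ha'a
  obtain ⟨w, hwmem, hwents⟩ := second_comm_row (N := N) (p1 := j) (q1 := j1) (p2 := j1)
    (q2 := s) (by omega) (Fin.lt_def.mpr (by omega)) (by omega) u hm1 hc1mem
  have hm1xj1 : ∀ x : Fin n,
      ((a' * single j j1 1 * a - single j j1 1 :
        Matrix (Fin n) (Fin n) F)) x j1 = a' x j - (if j = x then 1 else 0) := by
    intro x
    rw [Matrix.sub_apply, triple_apply, haUT.2 j1, mul_one, mul_one]
    congr 1
    by_cases hx : j = x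
    · rw [← hx, Matrix.single_apply_same, if_pos rfl]
    · rw [Matrix.single_apply_of_ne, if_neg hx]
      rintro ⟨hc, -⟩
      exact hx hc
  have hw : ∀ x y : Fin n,
      w x y = if y = s then -((a' x j - (if j = x then 1 else 0)) * u) else 0 := by
    intro x y
    rw [hwents x y]
    by_cases hy : y = s
    · rw [if_pos hy, if_pos hy, hm1xj1 x]
    · rw [if_neg hy, if_neg hy]
  have hsupp : ∀ x y : Fin n, w x y ≠ 0 → (x : ℕ) ≤ (i : ℕ) ∧ y = s := by
    intro x y hxy
    rw [hw] at hxy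
    by_cases hy : y = s
    · refine ⟨?_, hy⟩
      by_contra hc
      rw [if_pos hy] at hxy
      have hA : a' x j - (if j = x then 1 else 0) = 0 := by
        rcases lt_trichotomy ((x : ℕ)) ((j : ℕ)) with h | h | h
        · rw [ha'uj x (by omega) h,
            if_neg (fun hc2 => by have := congrArg Fin.val hc2; omega)]
          ring
        · have hxj : x = j := Fin.ext h
          rw [hxj, ha'UT.2 j, if_pos rfl]
          ring
        · rw [ha'UT.1 x j (Fin.lt_def.mpr h),
            if_neg (fun hc2 => by have := congrArg Fin.val hc2; omega)]
          ring
      rw [hA, zero_mul, neg_zero] at hxy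
      exact hxy rfl
    · rw [if_neg hy] at hxy
      exact absurd rfl hxy
  refine ⟨w, hwmem, ?_, ?_, ?_⟩
  · refine RC_mul_zero (p := i) (q := s) (by omega) ?_ ?_ <;>
    · intro x y hxy
      by_contra hne
      obtain ⟨h1, h2⟩ := hsupp x y hne
      have h3 : (y : ℕ) = (s : ℕ) := by rw [h2]
      simp only [Set.mem_setOf_eq] at hxy
      exact hxy ⟨h1, by omega⟩
  · have hrieq : r = i := Fin.ext hri
    rw [hrieq, hw, if_pos rfl, if_neg (fun hc2 => by have := congrArg Fin.val hc2; omega),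
      sub_zero, ha'ij, hu]
    field_simp
  · intro x y hxy
    obtain ⟨hxr, hys⟩ := hsupp x y hxy
    have hys' : (y : ℕ) = (s : ℕ) := by rw [hys]
    refine ⟨?_, ?_, ?_⟩
    · rw [mem_upNum]
      exact ⟨(by omega : (x : ℕ) < (y : ℕ)), (i, j), hijlam,
        ⟨(by omega : (x : ℕ) ≤ (i : ℕ)), (by omega : (j : ℕ) ≤ (y : ℕ))⟩,
        (by omega : (j : ℕ) - (i : ℕ) + 2 ≤ (y : ℕ) - (x : ℕ))⟩
    · exact (by omega : (x : ℕ) + (n - (y : ℕ)) ≤ (r : ℕ) + (n - (s : ℕ)))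
    · intro hme
      have hme' : (x : ℕ) + (n - (y : ℕ)) = (r : ℕ) + (n - (s : ℕ)) := hme
      exact ⟨Fin.ext (by omega), hys⟩

lemma exists_w_caseC {r s i j : Fin n}
    (hijlam : (i, j) ∈ minimalsE n (suppOf n F N))
    {a a' : Matrix (Fin n) (Fin n) F} (haN : a ∈ N) (haij : a i j ≠ 0)
    (haUT : a ∈ UTset n F) (ha'UT : a' ∈ UTset n F) (haa' : a * a' = 1) (ha'a : a' * a = 1)
    (hjs : (j : ℕ) = (s : ℕ)) (hij : (i : ℕ) < (j : ℕ)) (hri : (r : ℕ) < (i : ℕ))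
    (hht : ((j : ℕ) - (i : ℕ)) + 2 ≤ (s : ℕ) - (r : ℕ))
    (hK : ∀ u v : Fin n, (i : ℕ) ≤ (u : ℕ) → (v : ℕ) ≤ (j : ℕ) → (u : ℕ) < (v : ℕ) →
       ¬((u : ℕ) = (i : ℕ) ∧ (v : ℕ) = (j : ℕ)) → a u v = 0)
    (t0 : F) :
    ∃ w : Matrix (Fin n) (Fin n) F,
      (1 + w) ∈ commSet (UTset n F) (commSet (UTset n F) N) ∧
        w * w = 0 ∧ w r s = t0 ∧
        ∀ x y : Fin n, w x y ≠ 0 →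
          ((x, y) ∈ upNum n (minimalsE n (suppOf n F N)) 2 ∧
            meas (x, y) ≤ meas (r, s) ∧ (meas (x, y) = meas (r, s) → x = r ∧ y = s)) := by
  classical
  have hin : (i : ℕ) < n := i.isLt
  have hr2 : (r : ℕ) + 2 ≤ (i : ℕ) := by omega
  set r1 : Fin n := ⟨(r : ℕ) + 1, by omega⟩ with hr1
  have hr1v : (r1 : ℕ) = (r : ℕ) + 1 := rfl
  set u : F := t0 / a i j with hu
  have hr1i : (r1 : ℕ) < (i : ℕ) := by omega
  have hr1ine : r1 ≠ i := fun h => by have := congrArg Fin.val h; omega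
  have hm1 := m1_supp (p := r1) (q := i) (1 : F) haUT ha'UT
  have hc1mem : (1 + (a' * single r1 i 1 * a - single r1 i 1))
      ∈ commSet (UTset n F) N := by
    rw [← comm_eq hr1ine ha'a (ha'UT.1 i r1 (Fin.lt_def.mpr hr1i)) 1]
    exact comm_mem (Fin.lt_def.mpr hr1i) 1 haN haa' ha'a
  obtain ⟨w, hwmem, hwents⟩ := second_comm_col (N := N) (p1 := r1) (q1 := i) (p2 := r)
    (q2 := r1) hr1i (Fin.lt_def.mpr (by omega)) (by omega) u hm1 hc1mem
  have hm1r1y : ∀ y : Fin n,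
      ((a' * single r1 i 1 * a - single r1 i 1 :
        Matrix (Fin n) (Fin n) F)) r1 y = a i y - (if i = y then 1 else 0) := by
    intro y
    rw [Matrix.sub_apply, triple_apply, ha'UT.2 r1, one_mul, one_mul]
    congr 1
    by_cases hyi : i = y
    · rw [← hyi, Matrix.single_apply_same, if_pos rfl]
    · rw [Matrix.single_apply_of_ne, if_neg hyi]
      rintro ⟨-, hc⟩
      exact hyi hc
  have hw : ∀ x y : Fin n,
      w x y = if x = r then (a i y - (if i = y then 1 else 0)) * u else 0 := by
    intro x y
    rw [hwents x y]
    by_cases hx : x = r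
    · rw [if_pos hx, if_pos hx, hm1r1y y]
    · rw [if_neg hx, if_neg hx]
  have hsupp : ∀ x y : Fin n, w x y ≠ 0 → x = r ∧ (j : ℕ) ≤ (y : ℕ) := by
    intro x y hxy
    rw [hw] at hxy
    by_cases hx : x = r
    · refine ⟨hx, ?_⟩
      by_contra hc
      rw [if_pos hx] at hxy
      have hB : a i y - (if i = y then 1 else 0) = 0 := by
        rcases lt_trichotomy ((y : ℕ)) ((i : ℕ)) with h | h | h
        · rw [haUT.1 i y (Fin.lt_def.mpr h),
            if_neg (fun hc2 => by have := congrArg Fin.val hc2; omega)]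
          ring
        · have hiy : i = y := (Fin.ext h).symm
          rw [if_pos hiy, ← hiy, haUT.2 i]
          ring
        · rw [hK i y le_rfl (by omega) h (fun hc2 => by omega),
            if_neg (fun hc2 => by have := congrArg Fin.val hc2; omega)]
          ring
      rw [hB, zero_mul] at hxy
      exact hxy rfl
    · rw [if_neg hx] at hxy
      exact absurd rfl hxy
  refine ⟨w, hwmem, ?_, ?_, ?_⟩
  · refine RC_mul_zero (p := r) (q := j) (by omega) ?_ ?_ <;>
    · intro x y hxy
      by_contra hne
      obtain ⟨h1, h2⟩ := hsupp x y hne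
      have h3 : (x : ℕ) = (r : ℕ) := by rw [h1]
      simp only [Set.mem_setOf_eq] at hxy
      exact hxy ⟨by omega, h2⟩
  · have hsj : s = j := Fin.ext hjs.symm
    rw [hsj, hw, if_pos rfl, if_neg (fun hc2 => by have := congrArg Fin.val hc2; omega),
      sub_zero, hu]
    field_simp
  · intro x y hxy
    obtain ⟨hxr, hyj⟩ := hsupp x y hxy
    have hxr' : (x : ℕ) = (r : ℕ) := by rw [hxr]
    refine ⟨?_, ?_, ?_⟩
    · rw [mem_upNum]
      exact ⟨(by omega : (x : ℕ) < (y : ℕ)), (i, j), hijlam,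
        ⟨(by omega : (x : ℕ) ≤ (i : ℕ)), (by omega : (j : ℕ) ≤ (y : ℕ))⟩,
        (by omega : (j : ℕ) - (i : ℕ) + 2 ≤ (y : ℕ) - (x : ℕ))⟩
    · exact (by omega : (x : ℕ) + (n - (y : ℕ)) ≤ (r : ℕ) + (n - (s : ℕ)))
    · intro hme
      have hme' : (x : ℕ) + (n - (y : ℕ)) = (r : ℕ) + (n - (s : ℕ)) := hme
      have hyn : (y : ℕ) < n := y.isLt
      exact ⟨hxr, Fin.ext (by omega)⟩

lemma exists_w (hN : IsNormalSubgroupUT n F N) {r s : Fin n}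
    (hrs : (r, s) ∈ upNum n (minimalsE n (suppOf n F N)) 2) (t0 : F) :
    ∃ w : Matrix (Fin n) (Fin n) F,
      (1 + w) ∈ commSet (UTset n F) (commSet (UTset n F) N) ∧
        w * w = 0 ∧ w r s = t0 ∧
        ∀ x y : Fin n, w x y ≠ 0 →
          ((x, y) ∈ upNum n (minimalsE n (suppOf n F N)) 2 ∧
            meas (x, y) ≤ meas (r, s) ∧ (meas (x, y) = meas (r, s) → x = r ∧ y = s)) := by
  classical
  rw [mem_upNum] at hrs
  obtain ⟨hrs1, p, hplam, hle, hht⟩ := hrs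
  obtain ⟨i, j⟩ := p
  have hri : (r : ℕ) ≤ (i : ℕ) := hle.1
  have hjs : (j : ℕ) ≤ (s : ℕ) := hle.2
  have hht' : (j : ℕ) - (i : ℕ) + 2 ≤ (s : ℕ) - (r : ℕ) := hht
  obtain ⟨hijlt, a, haN, haij⟩ := hplam.1
  have hmin := hplam.2
  obtain ⟨a', ha'N, haa', ha'a⟩ := hN.2.2.2.1 a haN
  have haUT := hN.1 haN
  have ha'UT := UT_inv_mem haUT haa' ha'a
  have hij : (i : ℕ) < (j : ℕ) := Fin.lt_def.mp hijlt
  have hK : ∀ u v : Fin n, (i : ℕ) ≤ (u : ℕ) → (v : ℕ) ≤ (j : ℕ) → (u : ℕ) < (v : ℕ) →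
      ¬((u : ℕ) = (i : ℕ) ∧ (v : ℕ) = (j : ℕ)) → a u v = 0 := by
    intro u v h1 h2 h3 h4
    by_contra hne
    have hmem : (u, v) ∈ suppOf n F N := ⟨Fin.lt_def.mpr h3, a, haN, hne⟩
    have heq := hmin (u, v) hmem ⟨Fin.le_def.mpr h1, Fin.le_def.mpr h2⟩
    obtain ⟨hu, hv⟩ := Prod.ext_iff.mp heq
    exact h4 ⟨congrArg Fin.val hu, congrArg Fin.val hv⟩
  by_cases hC : (j : ℕ) = (s : ℕ)
  · exact exists_w_caseC (r := r) (s := s) hplam haN haij haUT ha'UT haa' ha'a hC hij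
      (by omega) (by omega) hK t0
  · by_cases hB : (r : ℕ) = (i : ℕ)
    · have hIJ := inv_entry_j haUT ha'UT ha'a hij hK
      exact exists_w_caseB (r := r) (s := s) hplam haN haij haUT ha'UT haa' ha'a hB hij
        (by omega) (by omega) hIJ.1 hIJ.2 t0
    · exact exists_w_caseA (r := r) (s := s) hplam haN haij haUT ha'UT haa' ha'a
        (by omega) (by omega) hij (by omega) t0

lemma commSet2_subset (hG : True) :
    commSet (UTset n F) (commSet (UTset n F) N) ⊆
      commClosure (UTset n F) (commClosure (UTset n F) N) :=
  fun _ hz => commSet_subset_closure (commSet_mono commSet_subset_closure hz)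

lemma main_ind (hN : IsNormalSubgroupUT n F N) :
    ∀ K : ℕ, ∀ T : Finset (Fin n × Fin n), ∀ v : Matrix (Fin n) (Fin n) F,
      (∀ x y : Fin n, v x y ≠ 0 →
        (x, y) ∈ upNum n (minimalsE n (suppOf n F N)) 2 ∧ meas (x, y) ≤ K ∧
          (meas (x, y) = K → (x, y) ∈ T)) →
      (1 + v) ∈ commClosure (UTset n F) (commClosure (UTset n F) N) := by
  intro K
  induction K with
  | zero =>
    intro T v hv
    have hv0 : v = 0 := by
      ext x y
      by_contra hne
      have h1 := (hv x y hne).2.1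
      have h2 : (x : ℕ) + (n - (y : ℕ)) ≤ 0 := h1
      have hyn : (y : ℕ) < n := y.isLt
      omega
    rw [hv0, add_zero]
    exact one_mem_commClosure
  | succ K ih =>
    intro T
    induction T using Finset.strongInduction with
    | _ T ihT =>
      intro v hv
      by_cases hex : ∃ p : Fin n × Fin n, p ∈ T ∧ v p.1 p.2 ≠ 0 ∧ meas p = K + 1
      · obtain ⟨⟨r, s⟩, hpT, hpv, hpm⟩ := hex
        have hpm' : (r : ℕ) + (n - (s : ℕ)) = K + 1 := hpm
        have hrs2 : (r, s) ∈ upNum n (minimalsE n (suppOf n F N)) 2 := (hv r s hpv).1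
        obtain ⟨w, hwD, hww, hwrs, hwsupp⟩ := exists_w hN hrs2 (v r s)
        have hfact : 1 + v = (1 + w) * (1 + (v - w - w * v)) := by
          have e : (1 + w) * (1 + (v - w - w * v)) =
              1 + v - w * w - w * w * v := by noncomm_ring
          rw [e, hww]
          simp
        have hwv : ∀ x y : Fin n, (w * v) x y ≠ 0 →
            (x, y) ∈ upNum n (minimalsE n (suppOf n F N)) 2 ∧
              (x : ℕ) + (n - (y : ℕ)) ≤ K := by
          intro x y hxy
          rw [Matrix.mul_apply] at hxy
          obtain ⟨k, -, hk⟩ := Finset.exists_ne_zero_of_sum_ne_zero hxy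
          have hwk : w x k ≠ 0 := fun h => hk (by rw [h, zero_mul])
          have hvk : v k y ≠ 0 := fun h => hk (by rw [h, mul_zero])
          obtain ⟨hup1, hm1, -⟩ := hwsupp x k hwk
          obtain ⟨hup2, hm2, -⟩ := hv k y hvk
          have hm1' : (x : ℕ) + (n - (k : ℕ)) ≤ (r : ℕ) + (n - (s : ℕ)) := hm1
          rw [mem_upNum] at hup1 hup2 ⊢
          obtain ⟨hk1, p, hp, hple, hph⟩ := hup2
          obtain ⟨hk0, -⟩ := hup1
          have hp12 : (p.1 : ℕ) < (p.2 : ℕ) := Fin.lt_def.mp (minimalsE_lt p hp)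
          have hple1 : (k : ℕ) ≤ (p.1 : ℕ) := hple.1
          have hple2 : (p.2 : ℕ) ≤ (y : ℕ) := hple.2
          have hkn : (k : ℕ) < n := k.isLt
          have hk1' : (k : ℕ) < (y : ℕ) := hk1
          have hk0' : (x : ℕ) < (k : ℕ) := hk0
          have hph' : (p.2 : ℕ) - (p.1 : ℕ) + 2 ≤ (y : ℕ) - (k : ℕ) := hph
          have hm2' : (k : ℕ) + (n - (y : ℕ)) ≤ K + 1 := hm2
          have hyn : (y : ℕ) < n := y.isLt
          constructor
          · exact ⟨(by omega : (x : ℕ) < (y : ℕ)), p, hp,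
              ⟨(by omega : (x : ℕ) ≤ (p.1 : ℕ)), hple2⟩,
              (by omega : (p.2 : ℕ) - (p.1 : ℕ) + 2 ≤ (y : ℕ) - (x : ℕ))⟩
          · omega
        have hv'h : ∀ x y : Fin n, (v - w - w * v) x y ≠ 0 →
            (x, y) ∈ upNum n (minimalsE n (suppOf n F N)) 2 ∧ meas (x, y) ≤ K + 1 ∧
              (meas (x, y) = K + 1 → (x, y) ∈ T.erase (r, s)) := by
          intro x y hxy
          have hent : v x y - w x y - (w * v) x y ≠ 0 := by
            simpa [Matrix.sub_apply] using hxy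
          have htri : v x y ≠ 0 ∨ w x y ≠ 0 ∨ (w * v) x y ≠ 0 := by
            by_contra hcc
            push_neg at hcc
            rw [hcc.1, hcc.2.1, hcc.2.2] at hent
            simp at hent
          refine ⟨?_, ?_, ?_⟩
          · rcases htri with h | h | h
            · exact (hv x y h).1
            · exact (hwsupp x y h).1
            · exact (hwv x y h).1
          · rcases htri with h | h | h
            · exact (hv x y h).2.1
            · have := (hwsupp x y h).2.1
              have h2 : (x : ℕ) + (n - (y : ℕ)) ≤ (r : ℕ) + (n - (s : ℕ)) := this
              exact (by omega : (x : ℕ) + (n - (y : ℕ)) ≤ K + 1)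
            · have := (hwv x y h).2
              exact (by omega : (x : ℕ) + (n - (y : ℕ)) ≤ K + 1)
          · intro hKe
            have hKe' : (x : ℕ) + (n - (y : ℕ)) = K + 1 := hKe
            have hwv0 : (w * v) x y = 0 := by
              by_contra h
              have := (hwv x y h).2
              omega
            have hxyne : (x, y) ≠ (r, s) := by
              intro he
              obtain ⟨he1, he2⟩ := Prod.ext_iff.mp he
              have he1' : x = r := he1
              have he2' : y = s := he2
              rw [he1', he2'] at hent hwv0
              rw [hwrs, hwv0] at hent
              simp at hent
            have hvne : v x y ≠ 0 := by
              by_contra hv0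
              have hwne : w x y ≠ 0 := by
                rw [hv0, hwv0] at hent
                intro h
                rw [h] at hent
                simp at hent
              obtain ⟨-, -, heq⟩ := hwsupp x y hwne
              have hxy_eq := heq (by
                show (x : ℕ) + (n - (y : ℕ)) = (r : ℕ) + (n - (s : ℕ))
                omega)
              exact hxyne (Prod.ext hxy_eq.1 hxy_eq.2)
            exact Finset.mem_erase.mpr ⟨hxyne, (hv x y hvne).2.2 hKe⟩
        rw [hfact]
        exact mul_mem_commClosure
          (commSet_subset_closure (commSet_mono commSet_subset_closure hwD))
          (ihT (T.erase (r, s)) (Finset.erase_ssubset hpT) (v - w - w * v) hv'h)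
      · refine ih Finset.univ v ?_
        intro x y hxy
        obtain ⟨h1, h2, h3⟩ := hv x y hxy
        have hne : meas (x, y) ≠ K + 1 := fun hm => hex ⟨(x, y), h3 hm, hxy, hm⟩
        have h2' : (x : ℕ) + (n - (y : ℕ)) ≤ K + 1 := h2
        have hne' : (x : ℕ) + (n - (y : ℕ)) ≠ K + 1 := hne
        exact ⟨h1, (by omega : (x : ℕ) + (n - (y : ℕ)) ≤ K), fun _ => Finset.mem_univ _⟩

end CaseA

/-- For a normal subgroup `N ⊴ UT_n(F_q)` with `supp(N) = ↑λ`,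
`[UT_n, [UT_n, N]] = UT_{↑²λ} = 1 + ut_{↑²λ}`. -/
theorem double_commutator_eq_upNum_two (n : ℕ) (F : Type*) [Field F] [Fintype F]
    (N : Set (Matrix (Fin n) (Fin n) F)) (hN : IsNormalSubgroupUT n F N) :
    commClosure (UTset n F) (commClosure (UTset n F) N) =
      (fun a => 1 + a) ''
        (utOf n F (upNum n (minimalsE n (suppOf n F N)) 2) :
          Set (Matrix (Fin n) (Fin n) F)) := by
  apply Set.Subset.antisymm
  · intro g hg
    have hg2 : sIn (upNum n (minimalsE n (suppOf n F N)) 2) (g - 1) := D_subset_Gs2 hN hg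
    exact ⟨g - 1, mem_utOf_iff.mpr hg2, by show 1 + (g - 1) = g; abel⟩
  · rintro g ⟨x, hx, rfl⟩
    show (1 + x) ∈ _
    have hsin := mem_utOf_iff.mp hx
    apply main_ind hN (2 * n) Finset.univ x
    intro x' y' hne
    have h1 : (x' : ℕ) < n := x'.isLt
    refine ⟨?_, (by omega : (x' : ℕ) + (n - (y' : ℕ)) ≤ 2 * n), fun _ => Finset.mem_univ _⟩
    by_contra hc
    exact hne (hsin x' y' hc)

end Paper
end

section
/- Let λ be a nonnesting set partition of [n] (an antichain in [[n]] under the order (i,j) ⪯ (r,s) iff r ≤ i < j ≤ s), and let a be a strictly upper triangular matrix supported on the upper set generated by λ. For any j with 1 ≤ j < n, the coset [F_q·e_{j,j+1}, a] + ut_{↑²λ} in ut_{↑¹λ}/ut_{↑²λ} equals: F_q(a_{i,j}e_{i,j+1} - a_{j+1,l}e_{j,l}) + ut_{↑²λ} if both (i,j) ∈ λ and (j+1,l) ∈ λ for some i, l; F_q(a_{i,j}e_{i,j+1}) + ut_{↑²λ} if (i,j) ∈ λ but no (j+1,l) ∈ λ; F_q(a_{j+1,l}e_{j,l}) + ut_{↑²λ}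 if (j+1,l) ∈ λ but no (i,j) ∈ λ; and ut_{↑²λ} otherwise. -/
open Matrix BigOperators

namespace Paper

variable (n : ℕ) (F : Type*) [Field F]

/-- Sum of two sets of matrices. -/
def addSet {M : Type*} [Add M] (A B : Set M) : Set M := {z | ∃ x ∈ A, ∃ y ∈ B, z = x + y}


/-- A matrix whose nonzero entries are indexed by `s` lies in `utOf s`. -/
lemma mem_utOf_of_support (s : Set (Fin n × Fin n)) (m : Matrix (Fin n) (Fin n) F)
    (h : ∀ p q : Fin n, m p q ≠ 0 → (p, q) ∈ s) : m ∈ utOf n F s := by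
  rw [Matrix.matrix_eq_sum_single m]
  refine Submodule.sum_mem _ fun p _ => Submodule.sum_mem _ fun q _ => ?_
  by_cases h0 : m p q = 0
  · simp [h0]
  · have hst : Matrix.single p q (m p q) = m p q • Matrix.single p q (1 : F) := by
      simp
    rw [hst]
    exact Submodule.smul_mem _ _ (Submodule.subset_span ⟨(p, q), h p q h0, rfl⟩)

lemma addSet_congr (M : Submodule F (Matrix (Fin n) (Fin n) F))
    (A B : Set (Matrix (Fin n) (Fin n) F))
    (h1 : ∀ a ∈ A, ∃ b ∈ B, a - b ∈ M) (h2 : ∀ b ∈ B, ∃ a ∈ A, b - a ∈ M) :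
    addSet A (M : Set (Matrix (Fin n) (Fin n) F)) = addSet B (M : Set (Matrix (Fin n) (Fin n) F)) := by
  ext z
  constructor
  · rintro ⟨x, hx, y, hy, rfl⟩
    obtain ⟨b, hb, hd⟩ := h1 x hx
    exact ⟨b, hb, (x - b) + y, M.add_mem hd hy, by abel⟩
  · rintro ⟨x, hx, y, hy, rfl⟩
    obtain ⟨b, hb, hd⟩ := h2 x hx
    exact ⟨b, hb, (x - b) + y, M.add_mem hd hy, by abel⟩

lemma addSet_eq_self (M : Submodule F (Matrix (Fin n) (Fin n) F))
    (A : Set (Matrix (Fin n) (Fin n) F))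
    (h1 : ∀ a ∈ A, a ∈ M) (h0 : (0 : Matrix (Fin n) (Fin n) F) ∈ A) :
    addSet A (M : Set (Matrix (Fin n) (Fin n) F)) = (M : Set (Matrix (Fin n) (Fin n) F)) := by
  ext z
  constructor
  · rintro ⟨x, hx, y, hy, rfl⟩
    exact M.add_mem (h1 x hx) hy
  · intro hz
    exact ⟨0, h0, z, hz, by abel⟩

/-- Lemma on `[F_q e_{j,j+1}, a] + ut_{↑²λ}` for `a` supported on `↑λ`, `λ` nonnesting:
the four-case description of this coset. -/
theorem bracket_coset_cases (n : ℕ) (F : Type*) [Field F] [Fintype F]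
    (lam : Set (Fin n × Fin n)) (hlam : IsNNSP n lam)
    (a : Matrix (Fin n) (Fin n) F) (ha : a ∈ utset n F)
    (hsupp : ∀ p : Fin n × Fin n, a p.1 p.2 ≠ 0 → p ∈ upGen n lam)
    (j j' : Fin n) (hj : (j' : ℕ) = (j : ℕ) + 1) :
    (∀ i l : Fin n, (i, j) ∈ lam → (j', l) ∈ lam →
      addSet {z | ∃ x : F, z = (x • Matrix.single j j' (1 : F)) * a -
          a * (x • Matrix.single j j' (1 : F))}
        (utOf n F (upNum n lam 2) : Set (Matrix (Fin n) (Fin n) F)) =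
      addSet {z | ∃ x : F, z = x • (a i j • Matrix.single i j' (1 : F) -
          a j' l • Matrix.single j l (1 : F))}
        (utOf n F (upNum n lam 2) : Set (Matrix (Fin n) (Fin n) F))) ∧
    (∀ i : Fin n, (i, j) ∈ lam → (∀ l : Fin n, (j', l) ∉ lam) →
      addSet {z | ∃ x : F, z = (x • Matrix.single j j' (1 : F)) * a -
          a * (x • Matrix.single j j' (1 : F))}
        (utOf n F (upNum n lam 2) : Set (Matrix (Fin n) (Fin n) F)) =
      addSet {z | ∃ x : F, z = x • (a i j • Matrix.single i j' (1 : F))}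
        (utOf n F (upNum n lam 2) : Set (Matrix (Fin n) (Fin n) F))) ∧
    (∀ l : Fin n, (j', l) ∈ lam → (∀ i : Fin n, (i, j) ∉ lam) →
      addSet {z | ∃ x : F, z = (x • Matrix.single j j' (1 : F)) * a -
          a * (x • Matrix.single j j' (1 : F))}
        (utOf n F (upNum n lam 2) : Set (Matrix (Fin n) (Fin n) F)) =
      addSet {z | ∃ x : F, z = x • (a j' l • Matrix.single j l (1 : F))}
        (utOf n F (upNum n lam 2) : Set (Matrix (Fin n) (Fin n) F))) ∧
    ((∀ i : Fin n, (i, j) ∉ lam) → (∀ l : Fin n, (j', l) ∉ lam) →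
      addSet {z | ∃ x : F, z = (x • Matrix.single j j' (1 : F)) * a -
          a * (x • Matrix.single j j' (1 : F))}
        (utOf n F (upNum n lam 2) : Set (Matrix (Fin n) (Fin n) F)) =
      (utOf n F (upNum n lam 2) : Set (Matrix (Fin n) (Fin n) F))) := by
  classical
  obtain ⟨⟨hedge, hfst, hsnd⟩, hanti⟩ := hlam
  have hjj' : j < j' := by rw [Fin.lt_def]; omega
  -- entrywise formula for the bracket
  have hw : ∀ (x : F) (p q : Fin n),
      ((x • Matrix.single j j' (1 : F)) * a -
        a * (x • Matrix.single j j' (1 : F))) p q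
      = x * ((if p = j then a j' q else 0) - (if q = j' then a p j else 0)) := by
    intro x p q
    rw [Matrix.sub_apply, smul_mul_assoc, mul_smul_comm, Matrix.smul_apply, Matrix.smul_apply]
    have h1 : (Matrix.single j j' (1 : F) * a) p q = if p = j then a j' q else 0 := by
      by_cases h : p = j
      · subst h; simp
      · simp [Matrix.single_mul_apply_of_ne _ _ _ _ _ h, h]
    have h2 : (a * Matrix.single j j' (1 : F)) p q = if q = j' then a p j else 0 := by
      by_cases h : q = j'
      · subst h; simp
      · simp [Matrix.mul_single_apply_of_ne _ _ _ _ _ h, h]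
    rw [h1, h2, smul_eq_mul, smul_eq_mul, mul_sub]
  -- two support lemmas
  have S1 : ∀ q : Fin n, a j' q ≠ 0 → (j', q) ∉ lam → (j, q) ∈ upNum n lam 2 := by
    intro q hq hnot
    obtain ⟨hlt, r, hr, hle1, hle2⟩ := hsupp (j', q) hq
    have hr12 : r.1 < r.2 := hedge r hr
    have hb1 : (j' : ℕ) ≤ (r.1 : ℕ) := Fin.le_def.mp hle1
    have hb2 : (r.2 : ℕ) ≤ (q : ℕ) := Fin.le_def.mp hle2
    have hb3 : (r.1 : ℕ) < (r.2 : ℕ) := Fin.lt_def.mp hr12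
    have hne : (r.1 : ℕ) ≠ (j' : ℕ) ∨ (r.2 : ℕ) ≠ (q : ℕ) := by
      by_contra hc
      push_neg at hc
      apply hnot
      have hre : r = (j', q) := Prod.ext (Fin.ext hc.1) (Fin.ext hc.2)
      rwa [hre] at hr
    refine ⟨lt_trans hjj' hlt, r, hr, ⟨Fin.le_def.mpr ?_, hle2⟩, ?_⟩
    · show (j : ℕ) ≤ (r.1 : ℕ)
      omega
    · show (r.2 : ℕ) - (r.1 : ℕ) + 2 ≤ (q : ℕ) - (j : ℕ)
      omega
  have S2 : ∀ p : Fin n, a p j ≠ 0 → (p, j) ∉ lam → (p, j') ∈ upNum n lam 2 := by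
    intro p hp hnot
    obtain ⟨hlt, r, hr, hle1, hle2⟩ := hsupp (p, j) hp
    have hr12 : r.1 < r.2 := hedge r hr
    have hb1 : (p : ℕ) ≤ (r.1 : ℕ) := Fin.le_def.mp hle1
    have hb2 : (r.2 : ℕ) ≤ (j : ℕ) := Fin.le_def.mp hle2
    have hb3 : (r.1 : ℕ) < (r.2 : ℕ) := Fin.lt_def.mp hr12
    have hb4 : (p : ℕ) < (j : ℕ) := Fin.lt_def.mp hlt
    have hne : (r.1 : ℕ) ≠ (p : ℕ) ∨ (r.2 : ℕ) ≠ (j : ℕ) := by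
      by_contra hc
      push_neg at hc
      apply hnot
      have hre : r = (p, j) := Prod.ext (Fin.ext hc.1) (Fin.ext hc.2)
      rwa [hre] at hr
    refine ⟨Fin.lt_def.mpr ?_, r, hr, ⟨hle1, Fin.le_def.mpr ?_⟩, ?_⟩
    · show (p : ℕ) < (j' : ℕ)
      omega
    · show (r.2 : ℕ) ≤ (j' : ℕ)
      omega
    · show (r.2 : ℕ) - (r.1 : ℕ) + 2 ≤ (j' : ℕ) - (p : ℕ)
      omega
  -- the canonical representative matrix
  set v : Matrix (Fin n) (Fin n) F := Matrix.of fun p q =>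
    (if p = j ∧ (j', q) ∈ lam then a j' q else 0) -
    (if q = j' ∧ (p, j) ∈ lam then a p j else 0) with hv
  have hkey : ∀ x : F,
      ((x • Matrix.single j j' (1 : F)) * a -
        a * (x • Matrix.single j j' (1 : F))) - x • v ∈ utOf n F (upNum n lam 2) := by
    intro x
    apply mem_utOf_of_support
    intro p q hne
    rw [Matrix.sub_apply, hw, Matrix.smul_apply, hv] at hne
    have hcases : (p = j ∧ (j', q) ∉ lam ∧ a j' q ≠ 0) ∨
        (q = j' ∧ (p, j) ∉ lam ∧ a p j ≠ 0) := by
      by_contra hc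
      push_neg at hc
      obtain ⟨hc1, hc2⟩ := hc
      apply hne
      have e1 : (if p = j then a j' q else 0) = (if p = j ∧ (j', q) ∈ lam then a j' q else 0) := by
        by_cases h1 : p = j
        · by_cases hm : (j', q) ∈ lam
          · simp [h1, hm]
          · simp [h1, hm, hc1 h1 hm]
        · simp [h1]
      have e2 : (if q = j' then a p j else 0) = (if q = j' ∧ (p, j) ∈ lam then a p j else 0) := by
        by_cases h1 : q = j'
        · by_cases hm : (p, j) ∈ lam
          · simp [h1, hm]
          · simp [h1, hm, hc2 h1 hm]
        · simp [h1]
      simp only [Matrix.of_apply, smul_eq_mul]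
      rw [← e1, ← e2]
      ring
    rcases hcases with ⟨hp, hm, hz⟩ | ⟨hq, hm, hz⟩
    · subst hp
      exact S1 q hz hm
    · subst hq
      exact S2 p hz hm
  have hzeroA : (0 : Matrix (Fin n) (Fin n) F) ∈
      {z | ∃ x : F, z = (x • Matrix.single j j' (1 : F)) * a -
        a * (x • Matrix.single j j' (1 : F))} := ⟨0, by simp⟩
  refine ⟨?_, ?_, ?_, ?_⟩
  · -- case 1 : both arcs exist
    intro i l hi hl
    have hvrep : v = a j' l • Matrix.single j l (1 : F) -
        a i j • Matrix.single i j' (1 : F) := by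
      ext p q
      simp only [hv, Matrix.of_apply, Matrix.sub_apply, Matrix.smul_apply,
        Matrix.single, smul_eq_mul, mul_ite, mul_one, mul_zero]
      congr 1
      · by_cases h1 : p = j
        · by_cases h2 : (j', q) ∈ lam
          · have hq : l = q := congrArg Prod.snd (hfst (j', l) hl (j', q) h2 rfl)
            simp [h1, h2, hq]
          · have h3 : ¬ l = q := fun h => h2 (h ▸ hl)
            simp [h1, h2, h3]
        · have h1' : ¬ j = p := fun h => h1 h.symm
          simp [h1, h1']
      · by_cases h2 : q = j'
        · by_cases h3 : (p, j) ∈ lam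
          · have hip : i = p := congrArg Prod.fst (hsnd (i, j) hi (p, j) h3 rfl)
            simp [h2, h3, ← hip, hi]
          · have h4 : ¬ i = p := fun h => h3 (by rw [← h]; exact hi)
            simp [h2, h3, h4]
        · have h2' : ¬ j' = q := fun h => h2 h.symm
          simp [h2, h2']
    apply addSet_congr
    · rintro z ⟨x, rfl⟩
      refine ⟨_, ⟨-x, rfl⟩, ?_⟩
      have h' : (-x : F) • (a i j • Matrix.single i j' (1 : F) -
          a j' l • Matrix.single j l (1 : F)) = x • v := by
        rw [hvrep]; module
      rw [h']
      exact hkey x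
    · rintro z ⟨x, rfl⟩
      refine ⟨_, ⟨-x, rfl⟩, ?_⟩
      have h' : (x : F) • (a i j • Matrix.single i j' (1 : F) -
          a j' l • Matrix.single j l (1 : F)) = (-x) • v := by
        rw [hvrep]; module
      rw [h']
      have h2 := Submodule.neg_mem _ (hkey (-x))
      rw [neg_sub] at h2
      exact h2
  · -- case 2 : only (i,j)
    intro i hi hnol
    have hvrep : v = -(a i j • Matrix.single i j' (1 : F)) := by
      ext p q
      simp only [hv, Matrix.of_apply, Matrix.neg_apply, Matrix.smul_apply,
        Matrix.single, smul_eq_mul, mul_ite, mul_one, mul_zero]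
      have e1 : ¬ (p = j ∧ (j', q) ∈ lam) := fun h => hnol q h.2
      rw [if_neg e1, zero_sub, neg_inj]
      by_cases h2 : q = j'
      · by_cases h3 : (p, j) ∈ lam
        · have hip : i = p := congrArg Prod.fst (hsnd (i, j) hi (p, j) h3 rfl)
          simp [h2, h3, ← hip, hi]
        · have h4 : ¬ i = p := fun h => h3 (by rw [← h]; exact hi)
          simp [h2, h3, h4]
      · have h2' : ¬ j' = q := fun h => h2 h.symm
        simp [h2, h2']
    apply addSet_congr
    · rintro z ⟨x, rfl⟩
      refine ⟨_, ⟨-x, rfl⟩, ?_⟩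
      have h' : (-x : F) • (a i j • Matrix.single i j' (1 : F)) = x • v := by
        rw [hvrep]; module
      rw [h']
      exact hkey x
    · rintro z ⟨x, rfl⟩
      refine ⟨_, ⟨-x, rfl⟩, ?_⟩
      have h' : (x : F) • (a i j • Matrix.single i j' (1 : F)) = (-x) • v := by
        rw [hvrep]; module
      rw [h']
      have h2 := Submodule.neg_mem _ (hkey (-x))
      rw [neg_sub] at h2
      exact h2
  · -- case 3 : only (j',l)
    intro l hl hnoi
    have hvrep : v = a j' l • Matrix.single j l (1 : F) := by
      ext p q
      simp only [hv, Matrix.of_apply, Matrix.smul_apply,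
        Matrix.single, smul_eq_mul, mul_ite, mul_one, mul_zero]
      have e2 : ¬ (q = j' ∧ (p, j) ∈ lam) := fun h => hnoi p h.2
      rw [if_neg e2, sub_zero]
      by_cases h1 : p = j
      · by_cases h2 : (j', q) ∈ lam
        · have hq : l = q := congrArg Prod.snd (hfst (j', l) hl (j', q) h2 rfl)
          simp [h1, h2, hq]
        · have h3 : ¬ l = q := fun h => h2 (h ▸ hl)
          simp [h1, h2, h3]
      · have h1' : ¬ j = p := fun h => h1 h.symm
        simp [h1, h1']
    apply addSet_congr
    · rintro z ⟨x, rfl⟩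
      refine ⟨_, ⟨x, rfl⟩, ?_⟩
      rw [← hvrep]
      exact hkey x
    · rintro z ⟨x, rfl⟩
      refine ⟨_, ⟨x, rfl⟩, ?_⟩
      rw [← hvrep]
      have h2 := Submodule.neg_mem _ (hkey x)
      rw [neg_sub] at h2
      exact h2
  · -- case 4 : neither
    intro hnoi hnol
    have hvrep : v = 0 := by
      ext p q
      simp only [hv, Matrix.of_apply, Matrix.zero_apply]
      have e1 : ¬ (p = j ∧ (j', q) ∈ lam) := fun h => hnol q h.2
      have e2 : ¬ (q = j' ∧ (p, j) ∈ lam) := fun h => hnoi p h.2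
      rw [if_neg e1, if_neg e2, sub_zero]
    apply addSet_eq_self
    · rintro z ⟨x, rfl⟩
      have := hkey x
      rw [hvrep, smul_zero, sub_zero] at this
      exact this
    · exact hzeroA

end Paper
end

section
/- Let S = λ ⊔ ν be a splice of a set partition λ of [n], and let R be a row of S (an equivalence class of vertical edges under the relation generated by bindings). Let I and K be the connected components of the graph of λ containing the upper endpoints {i : (i,k) ∈ R} and the lower endpoints {k : (i,k) ∈ R}, respectively. Then I ≠ K; moreover if λ is nonnesting, then every vertical edge (i,k) ∈ ν with i ∈ I or k ∈ K belongs to R. -/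
open Matrix BigOperators

namespace Paper

variable (n : ℕ) (F : Type*) [Field F]

section RowAux

variable {n : ℕ} {lam nu : Set (Fin n × Fin n)}

/-- Forward (left-to-right) reachability in the graph of `lam`. -/
def fwdRel (lam : Set (Fin n × Fin n)) : Fin n → Fin n → Prop :=
  Relation.ReflTransGen (fun x y => (x, y) ∈ lam)

lemma fwd_le (hlam : IsEdgeSet n lam) {x y : Fin n} (h : fwdRel lam x y) : x ≤ y := by
  induction h with
  | refl => exact le_refl _
  | tail _ h ih => exact le_trans ih (le_of_lt (hlam _ h))

/-- Confluence from the right: two forward paths into the same vertex are comparable. -/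
lemma conflA (hlam : IsSetPartitionE n lam) :
    ∀ N : ℕ, ∀ y : Fin n, (y : ℕ) < N → ∀ x z : Fin n,
      fwdRel lam x y → fwdRel lam z y → fwdRel lam x z ∨ fwdRel lam z x := by
  intro N
  induction N with
  | zero => intro y hy; omega
  | succ N ih =>
    intro y hy x z hx hz
    rcases hx.cases_tail with rfl | ⟨w, hxw, hwy⟩
    · exact Or.inr hz
    rcases hz.cases_tail with rfl | ⟨w', hzw, hw'y⟩
    · exact Or.inl (hxw.tail hwy)
    have hww' : w = w' := by
      have := hlam.2.2 (w, y) hwy (w', y) hw'y rfl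
      exact congrArg Prod.fst this
    subst hww'
    have hwlt : (w : ℕ) < N := by
      have := hlam.1 (w, y) hwy
      have : (w : ℕ) < (y : ℕ) := this
      omega
    exact ih w hwlt x z hxw hzw

/-- Confluence from the left: two forward paths out of the same vertex are comparable. -/
lemma conflB (hlam : IsSetPartitionE n lam) :
    ∀ N : ℕ, ∀ y : Fin n, n - (y : ℕ) ≤ N → ∀ x z : Fin n,
      fwdRel lam y x → fwdRel lam y z → fwdRel lam x z ∨ fwdRel lam z x := by
  intro N
  induction N with
  | zero => intro y hy; have := y.isLt; omega
  | succ N ih =>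
    intro y hy x z hx hz
    rcases hx.cases_head with rfl | ⟨w, hxw, hwx⟩
    · exact Or.inl hz
    rcases hz.cases_head with rfl | ⟨w', hzw, hw'z⟩
    · exact Or.inr (Relation.ReflTransGen.head hxw hwx)
    have hww' : w = w' := by
      have := hlam.2.1 (y, w) hxw (y, w') hzw rfl
      exact congrArg Prod.snd this
    subst hww'
    have hwlt : n - (w : ℕ) ≤ N := by
      have h1 := hlam.1 (y, w) hxw
      have h2 : (y : ℕ) < (w : ℕ) := h1
      have := w.isLt
      omega
    exact ih w hwlt x z hwx hw'z

/-- Connectivity in the graph of `lam` implies forward comparability. -/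
lemma conn_comp (hlam : IsSetPartitionE n lam) {x y : Fin n} (h : conn n lam x y) :
    fwdRel lam x y ∨ fwdRel lam y x := by
  induction h with
  | refl => exact Or.inl Relation.ReflTransGen.refl
  | @tail b c _ h2 ih =>
    rcases ih with ih | ih
    · rcases h2 with h2 | h2
      · exact Or.inl (ih.tail h2)
      · exact conflA hlam n b b.isLt x c ih (Relation.ReflTransGen.single h2)
    · rcases h2 with h2 | h2
      · rcases conflB hlam n b (by omega) c x (Relation.ReflTransGen.single h2) ih with
          h | h
        · exact Or.inr h
        · exact Or.inl h
      · exact Or.inr ((Relation.ReflTransGen.single h2).trans ih)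

lemma mem_nu_not_mem_lam (hsp : IsSplice n lam nu) {p : Fin n × Fin n}
    (hp : p ∈ nu) : p ∉ lam :=
  fun hl => Set.disjoint_left.mp hsp.2.2.1 hl hp

/-- Forward binding step. -/
lemma forward_step (hsp : IsSplice n lam nu) {i j k : Fin n}
    (hik : (i, k) ∈ nu) (hij : (i, j) ∈ lam) (hjk : j < k) :
    ∃ l, (k, l) ∈ lam ∧ (j, l) ∈ nu ∧ rowRel n lam nu (i, k) (j, l) := by
  obtain ⟨l, hkl, hjl⟩ := (hsp.2.2.2.2 j k hjk).mp ⟨i, hik, hij⟩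
  exact ⟨l, hkl, hjl, ⟨(i, j, k, l), ⟨hij, hkl, hik, hjl, hjk⟩, Or.inl ⟨rfl, rfl⟩⟩⟩

/-- Backward binding step. -/
lemma backward_step (hsp : IsSplice n lam nu) {i j k : Fin n}
    (hik : (i, k) ∈ nu) (hjk : (j, k) ∈ lam) (hij : i < j) :
    ∃ i', (i', i) ∈ lam ∧ (i', j) ∈ nu ∧ rowRel n lam nu (i', j) (i, k) := by
  obtain ⟨i', hi'j, hi'i⟩ := (hsp.2.2.2.2 i j hij).mpr ⟨k, hjk, hik⟩
  exact ⟨i', hi'i, hi'j, ⟨(i', i, j, k), ⟨hi'i, hjk, hi'j, hik, hij⟩, Or.inl ⟨rfl, rfl⟩⟩⟩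

/-- Nonnesting: a `lam`-successor of `i` stays below `k` when `(i,k) ∈ nu`. -/
lemma nn_succ_lt (hsp : IsSplice n lam nu) (hnn : IsNNSP n lam) {i j k : Fin n}
    (hik : (i, k) ∈ nu) (hij : (i, j) ∈ lam) : j < k := by
  by_contra hc
  push_neg at hc
  have hne : k ≠ j := by
    rintro rfl; exact mem_nu_not_mem_lam hsp hik hij
  have hkj : k < j := lt_of_le_of_ne hc hne
  obtain ⟨m, him, hmk, hm⟩ := hsp.2.2.2.1 (i, k) hik
  rcases hm with hm | hm
  · have := hsp.1.2.1 (i, m) hm (i, j) hij rfl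
    have hmj : m = j := congrArg Prod.snd this
    subst hmj
    exact absurd (lt_trans hmk hkj) (lt_irrefl _)
  · have := hnn.2 (m, k) hm (i, j) hij ⟨le_of_lt him, le_of_lt hkj⟩
    have hmi : m = i := congrArg Prod.fst this
    subst hmi
    exact absurd him (lt_irrefl _)

/-- Nonnesting: a `lam`-predecessor of `k` stays above `i` when `(i,k) ∈ nu`. -/
lemma nn_pred_gt (hsp : IsSplice n lam nu) (hnn : IsNNSP n lam) {i j k : Fin n}
    (hik : (i, k) ∈ nu) (hjk : (j, k) ∈ lam) : i < j := by
  by_contra hc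
  push_neg at hc
  have hne : j ≠ i := by
    rintro rfl; exact mem_nu_not_mem_lam hsp hik hjk
  have hji : j < i := lt_of_le_of_ne hc hne
  obtain ⟨m, him, hmk, hm⟩ := hsp.2.2.2.1 (i, k) hik
  rcases hm with hm | hm
  · have := hnn.2 (i, m) hm (j, k) hjk ⟨le_of_lt hji, le_of_lt hmk⟩
    have : i = j := congrArg Prod.fst this
    subst this
    exact absurd hji (lt_irrefl _)
  · have := hsp.1.2.2 (m, k) hm (j, k) hjk rfl
    have : m = j := congrArg Prod.fst this
    subst this
    exact absurd (lt_trans hji him) (lt_irrefl _)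

/-- There is no forward `lam`-path between the endpoints of a `nu`-edge. -/
lemma no_fwd (hsp : IsSplice n lam nu) :
    ∀ N : ℕ, ∀ p ∈ nu, n - (p.1 : ℕ) ≤ N → ¬ fwdRel lam p.1 p.2 := by
  intro N
  induction N with
  | zero => intro p _ hN _; have := p.1.isLt; omega
  | succ N ih =>
    intro p hp hN hfwd
    have hp12 : p.1 < p.2 := hsp.2.1.1 p hp
    rcases hfwd.cases_head with heq | ⟨j, hij, hjk⟩
    · exact absurd heq (ne_of_lt hp12)
    have hjle : j ≤ p.2 := fwd_le hsp.1.1 hjk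
    have hjne : j ≠ p.2 := by
      rintro rfl
      exact mem_nu_not_mem_lam hsp (Prod.mk.eta (p := p) ▸ hp) hij
    have hjlt : j < p.2 := lt_of_le_of_ne hjle hjne
    obtain ⟨l, hkl, hjl, _⟩ := forward_step hsp (Prod.mk.eta (p := p) ▸ hp) hij hjlt
    have hnew : fwdRel lam j l := hjk.tail hkl
    have h1j : p.1 < j := hsp.1.1 (p.1, j) hij
    have h1j' : (p.1 : ℕ) < (j : ℕ) := h1j
    exact ih (j, l) hjl (by simp; omega) hnew

lemma rowRel_symm : Symmetric (rowRel n lam nu) := by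
  rintro p q ⟨b, hb, h | h⟩
  · exact ⟨b, hb, Or.inr h⟩
  · exact ⟨b, hb, Or.inl h⟩

/-- Row-equivalence propagates along forward paths between upper endpoints. -/
lemma row_of_fwd_fst (hsp : IsSplice n lam nu) (hnn : IsNNSP n lam) :
    ∀ N : ℕ, ∀ p ∈ nu, ∀ q ∈ nu, fwdRel lam p.1 q.1 → n - (p.1 : ℕ) ≤ N →
      Relation.ReflTransGen (rowRel n lam nu) p q := by
  intro N
  induction N with
  | zero => intro p _ q _ _ hN; have := p.1.isLt; omega
  | succ N ih =>
    intro p hp q hq hfwd hN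
    by_cases heq : p.1 = q.1
    · have : p = q := hsp.2.1.2.1 p hp q hq heq
      subst this; exact Relation.ReflTransGen.refl
    rcases hfwd.cases_head with h | ⟨j, hij, hjq⟩
    · exact absurd h heq
    have hjlt : j < p.2 := nn_succ_lt hsp hnn (Prod.mk.eta (p := p) ▸ hp) hij
    obtain ⟨l, hkl, hjl, hrel⟩ :=
      forward_step hsp (Prod.mk.eta (p := p) ▸ hp) hij hjlt
    have h1j' : (p.1 : ℕ) < (j : ℕ) := hsp.1.1 (p.1, j) hij
    have hrest : Relation.ReflTransGen (rowRel n lam nu) (j, l) q :=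
      ih (j, l) hjl q hq hjq (by simp; omega)
    exact Relation.ReflTransGen.head (Prod.mk.eta (p := p) ▸ hrel) hrest

/-- Row-equivalence propagates along forward paths between lower endpoints. -/
lemma row_of_fwd_snd (hsp : IsSplice n lam nu) (hnn : IsNNSP n lam) :
    ∀ N : ℕ, ∀ p ∈ nu, ∀ q ∈ nu, fwdRel lam p.2 q.2 → (q.2 : ℕ) ≤ N →
      Relation.ReflTransGen (rowRel n lam nu) p q := by
  intro N
  induction N with
  | zero =>
    intro p _ q hq _ hN
    have : (q.1 : ℕ) < (q.2 : ℕ) := hsp.2.1.1 q hq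
    omega
  | succ N ih =>
    intro p hp q hq hfwd hN
    by_cases heq : p.2 = q.2
    · have : p = q := hsp.2.1.2.2 p hp q hq heq
      subst this; exact Relation.ReflTransGen.refl
    rcases hfwd.cases_tail with h | ⟨c, hpc, hcq⟩
    · exact absurd h.symm heq
    have hq1c : q.1 < c := nn_pred_gt hsp hnn (Prod.mk.eta (p := q) ▸ hq) hcq
    obtain ⟨i', hi'1, hi'c, hrel⟩ :=
      backward_step hsp (Prod.mk.eta (p := q) ▸ hq) hcq hq1c
    have hclt : (c : ℕ) < (q.2 : ℕ) := hsp.1.1 (c, q.2) hcq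
    have hrest : Relation.ReflTransGen (rowRel n lam nu) p (i', c) :=
      ih p hp (i', c) hi'c hpc (by simp; omega)
    exact hrest.tail (Prod.mk.eta (p := q) ▸ hrel)

end RowAux

/-- For a splice `S = λ ⊔ ν` and a row `R` (the row equivalence class of `p₀ ∈ ν`):
the components of the graph of `λ` containing the upper and lower endpoints of `R` are
distinct, and if `λ` is nonnesting, every vertical edge with an endpoint in one of these
components belongs to `R`. -/
theorem row_components (n : ℕ) (lam nu : Set (Fin n × Fin n)) (hsp : IsSplice n lam nu)
    (p₀ : Fin n × Fin n) (hp₀ : p₀ ∈ nu) :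
    ¬ conn n lam p₀.1 p₀.2 ∧
    (IsNNSP n lam → ∀ q ∈ nu, (conn n lam q.1 p₀.1 ∨ conn n lam q.2 p₀.2) →
      Relation.ReflTransGen (rowRel n lam nu) p₀ q) := by
  have hlam := hsp.1
  have hnu := hsp.2.1
  constructor
  · intro hconn
    have h1 : p₀.1 < p₀.2 := hnu.1 p₀ hp₀
    rcases conn_comp hlam hconn with h | h
    · exact no_fwd hsp n p₀ hp₀ (by omega) h
    · exact absurd (fwd_le hlam.1 h) (not_le.mpr h1)
  · intro hnn q hq hor
    have hsymm : ∀ {a b : Fin n × Fin n}, Relation.ReflTransGen (rowRel n lam nu) a b →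
        Relation.ReflTransGen (rowRel n lam nu) b a := by
      haveI : Std.Symm (rowRel n lam nu) := ⟨fun a b h => rowRel_symm h⟩
      intro a b h
      exact Std.Symm.symm a b h
    rcases hor with h | h
    · rcases conn_comp hlam h with h | h
      · exact hsymm (row_of_fwd_fst hsp hnn n q hq p₀ hp₀ h (by omega))
      · exact row_of_fwd_fst hsp hnn n p₀ hp₀ q hq h (by omega)
    · rcases conn_comp hlam h with h | h
      · exact hsymm (row_of_fwd_snd hsp hnn n q hq p₀ hp₀ h (le_of_lt p₀.2.isLt))
      · exact row_of_fwd_snd hsp hnn n p₀ hp₀ q hq h (le_of_lt q.2.isLt)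

end Paper
end

section
/- Let λ be a nonnesting set partition of [n] and let S = λ ⊔ ν be a tight splice of λ (i.e., a splice with S ∩ ↑²λ = ∅). Then ν is also a nonnesting set partition of [n]. -/
open Matrix BigOperators

namespace Paper

variable (n : ℕ) (F : Type*) [Field F]

/-- If `S = λ ⊔ ν` is a tight splice of a nonnesting set partition `λ`, then `ν` is also a
nonnesting set partition. -/
theorem tight_splice_vertical_nonnesting (n : ℕ) (lam nu : Set (Fin n × Fin n))
    (hlam : IsNNSP n lam) (h : IsTightSplice n lam nu) : IsNNSP n nu := by
  obtain ⟨⟨hlamSP, hnuSP, hdisj, hmid, hS2⟩, hempty⟩ := h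
  refine ⟨hnuSP, ?_⟩
  rintro ⟨i, k⟩ hp ⟨r, s⟩ hq ⟨h1, h2⟩
  simp only at h1 h2
  by_cases hri : r = i
  · exact (hnuSP.2.1 _ hp _ hq hri.symm).symm ▸ rfl
  by_cases hks : k = s
  · exact hnuSP.2.2 _ hp _ hq hks
  have hik : i < k := hnuSP.1 _ hp
  have hrs : r < s := hnuSP.1 _ hq
  have hr : (r : ℕ) < i := lt_of_le_of_ne h1 (fun e => hri (Fin.ext e))
  have hk : (k : ℕ) < s := lt_of_le_of_ne h2 (fun e => hks (Fin.ext e))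
  obtain ⟨j, hij, hjk, hcase⟩ := hmid (i, k) hp
  exfalso
  have hmem : ((r, s) : Fin n × Fin n) ∈ (lam ∪ nu) ∩ upNum n lam 2 := by
    refine ⟨Or.inr hq, hrs, ?_⟩
    rcases hcase with hl | hl
    · exact ⟨(i, j), hl, ⟨le_of_lt (by exact_mod_cast hr),
        le_of_lt (lt_trans (by exact_mod_cast hjk) (by exact_mod_cast hk))⟩, by
          have h1' : (i : ℕ) < j := hij
          have h2' : (j : ℕ) < k := hjk
          simp only; omega⟩
    · exact ⟨(j, k), hl, ⟨le_of_lt (lt_trans (by exact_mod_cast hr)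
        (by exact_mod_cast hij)), le_of_lt (by exact_mod_cast hk)⟩, by
          have h1' : (i : ℕ) < j := hij
          have h2' : (j : ℕ) < k := hjk
          simp only; omega⟩
  rw [hempty] at hmem
  exact hmem

end Paper
end

section
/- For a nonnesting set partition λ of [n], the union of any collection of tight splices of λ is again a tight splice of λ. Consequently, the set of tight splices of λ has a maximum element K, and the tight splices of λ are exactly the sets λ ⊔ ν where ν is a union of rows of K. -/
open Matrix BigOperators

namespace Paper

variable (n : ℕ) (F : Type*) [Field F]

/-- Every arc of a tight splice lies exactly one above some `λ`-arc. -/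
lemma tight_below {lam nu : Set (Fin n × Fin n)} (h : IsTightSplice n lam nu)
    {p : Fin n × Fin n} (hp : p ∈ nu) :
    ∃ q ∈ lam, edgeLe n q p ∧ ((p.2 : ℕ) - (p.1 : ℕ) = ((q.2 : ℕ) - (q.1 : ℕ)) + 1) := by
  obtain ⟨⟨hlamsp, hnusp, hdisj, hS1, hS2⟩, htight⟩ := h
  obtain ⟨j, hj1, hj2, hj3⟩ := hS1 p hp
  have hpt : p ∉ upNum n lam 2 := fun hmem =>
    Set.eq_empty_iff_forall_notMem.mp htight p ⟨Set.mem_union_right _ hp, hmem⟩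
  have hplt : p.1 < p.2 := hnusp.1 p hp
  have h1 : (p.1 : ℕ) < (j : ℕ) := hj1
  have h2 : (j : ℕ) < (p.2 : ℕ) := hj2
  rcases hj3 with hl | hl
  · refine ⟨(p.1, j), hl, ⟨le_refl _, le_of_lt hj2⟩, ?_⟩
    have hno : ¬ (((j : ℕ) - (p.1 : ℕ)) + 2 ≤ (p.2 : ℕ) - (p.1 : ℕ)) := fun hh =>
      hpt ⟨hplt, (p.1, j), hl, ⟨le_refl _, le_of_lt hj2⟩, hh⟩
    simp only at hno ⊢
    omega
  · refine ⟨(j, p.2), hl, ⟨le_of_lt hj1, le_refl _⟩, ?_⟩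
    have hno : ¬ (((p.2 : ℕ) - (j : ℕ)) + 2 ≤ (p.2 : ℕ) - (p.1 : ℕ)) := fun hh =>
      hpt ⟨hplt, (j, p.2), hl, ⟨le_of_lt hj1, le_refl _⟩, hh⟩
    simp only at hno ⊢
    omega

/-- Two arcs of tight splices cannot be strictly nested. -/
lemma tight_edgeLe_eq {lam nu1 nu2 : Set (Fin n × Fin n)}
    (h1 : IsTightSplice n lam nu1) (h2 : IsTightSplice n lam nu2)
    {p q : Fin n × Fin n} (hp : p ∈ nu1) (hq : q ∈ nu2) (hle : edgeLe n p q) : p = q := by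
  by_contra hne
  obtain ⟨r, hr, hrle, hht⟩ := tight_below n h1 hp
  have hqlt : q.1 < q.2 := h2.1.2.1.1 q hq
  have hqt : q ∉ upNum n lam 2 := fun hmem =>
    Set.eq_empty_iff_forall_notMem.mp h2.2 q ⟨Set.mem_union_right _ hq, hmem⟩
  apply hqt
  refine ⟨hqlt, r, hr, ⟨le_trans hle.1 hrle.1, le_trans hrle.2 hle.2⟩, ?_⟩
  have e1 : (q.1 : ℕ) ≤ (p.1 : ℕ) := hle.1
  have e2 : (p.2 : ℕ) ≤ (q.2 : ℕ) := hle.2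
  have hstrict : (q.1 : ℕ) < (p.1 : ℕ) ∨ (p.2 : ℕ) < (q.2 : ℕ) := by
    by_contra hcon
    push_neg at hcon
    exact hne (Prod.ext (Fin.val_injective (le_antisymm hcon.1 e1))
      (Fin.val_injective (le_antisymm e2 hcon.2)))
  have e3 : (r.1 : ℕ) ≥ (p.1 : ℕ) := hrle.1
  have e4 : (r.2 : ℕ) ≤ (p.2 : ℕ) := hrle.2
  omega

/-- Arcs of tight splices sharing an endpoint are equal. -/
lemma tight_endpoint_eq {lam nu1 nu2 : Set (Fin n × Fin n)}
    (h1 : IsTightSplice n lam nu1) (h2 : IsTightSplice n lam nu2)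
    {p q : Fin n × Fin n} (hp : p ∈ nu1) (hq : q ∈ nu2)
    (h : p.1 = q.1 ∨ p.2 = q.2) : p = q := by
  rcases h with h | h
  · rcases le_total p.2 q.2 with hle | hle
    · exact tight_edgeLe_eq n h1 h2 hp hq ⟨h.ge, hle⟩
    · exact (tight_edgeLe_eq n h2 h1 hq hp ⟨h.le, hle⟩).symm
  · rcases le_total q.1 p.1 with hle | hle
    · exact tight_edgeLe_eq n h1 h2 hp hq ⟨hle, h.le⟩
    · exact (tight_edgeLe_eq n h2 h1 hq hp ⟨hle, h.ge⟩).symm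

/-- Unions of tight splices are tight splices. -/
lemma union_tight {lam : Set (Fin n × Fin n)} (hlam : IsNNSP n lam)
    (c : Set (Set (Fin n × Fin n))) (hc : ∀ nu ∈ c, IsTightSplice n lam nu) :
    IsTightSplice n lam (⋃₀ c) := by
  constructor
  · refine ⟨hlam.1, ⟨?_, ?_, ?_⟩, ?_, ?_, ?_⟩
    · rintro p hp
      obtain ⟨nu, hnu, hp⟩ := Set.mem_sUnion.mp hp
      exact (hc nu hnu).1.2.1.1 p hp
    · rintro p hp q hq h
      obtain ⟨nu, hnu, hp⟩ := Set.mem_sUnion.mp hp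
      obtain ⟨nu', hnu', hq⟩ := Set.mem_sUnion.mp hq
      exact tight_endpoint_eq n (hc nu hnu) (hc nu' hnu') hp hq (Or.inl h)
    · rintro p hp q hq h
      obtain ⟨nu, hnu, hp⟩ := Set.mem_sUnion.mp hp
      obtain ⟨nu', hnu', hq⟩ := Set.mem_sUnion.mp hq
      exact tight_endpoint_eq n (hc nu hnu) (hc nu' hnu') hp hq (Or.inr h)
    · rw [Set.disjoint_sUnion_right]
      intro nu hnu
      exact (hc nu hnu).1.2.2.1
    · rintro p hp
      obtain ⟨nu, hnu, hp⟩ := Set.mem_sUnion.mp hp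
      exact (hc nu hnu).1.2.2.2.1 p hp
    · intro j k hjk
      constructor
      · rintro ⟨i, hik, hij⟩
        obtain ⟨nu, hnu, hik⟩ := Set.mem_sUnion.mp hik
        obtain ⟨l, hkl, hjl⟩ := ((hc nu hnu).1.2.2.2.2 j k hjk).mp ⟨i, hik, hij⟩
        exact ⟨l, hkl, Set.mem_sUnion.mpr ⟨nu, hnu, hjl⟩⟩
      · rintro ⟨l, hkl, hjl⟩
        obtain ⟨nu, hnu, hjl⟩ := Set.mem_sUnion.mp hjl
        obtain ⟨i, hik, hij⟩ := ((hc nu hnu).1.2.2.2.2 j k hjk).mpr ⟨l, hkl, hjl⟩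
        exact ⟨i, Set.mem_sUnion.mpr ⟨nu, hnu, hik⟩, hij⟩
  · rw [Set.eq_empty_iff_forall_notMem]
    rintro p ⟨hpmem, hpup⟩
    rcases hpmem with hpl | hpnu
    · obtain ⟨hlt, q, hq, hqle, hht⟩ := hpup
      have heq : q = p := hlam.2 q hq p hpl hqle
      rw [heq] at hht
      omega
    · obtain ⟨nu, hnu, hp⟩ := Set.mem_sUnion.mp hpnu
      exact Set.eq_empty_iff_forall_notMem.mp (hc nu hnu).2 p
        ⟨Set.mem_union_right _ hp, hpup⟩

/-- One step of the row relation of any splice stays inside a tight splice. -/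
lemma row_step {lam nu nuK : Set (Fin n × Fin n)} (hlam : IsNNSP n lam)
    (hnu : IsTightSplice n lam nu) {x y : Fin n × Fin n} (hx : x ∈ nu)
    (hstep : rowRel n lam nuK x y) : y ∈ nu := by
  obtain ⟨⟨i, j, k, l⟩, ⟨hij, hkl, hik, hjl, hjk⟩, hcase⟩ := hstep
  rcases hcase with ⟨hx', hy'⟩ | ⟨hy', hx'⟩
  · subst hx' hy'
    obtain ⟨l', hkl', hjl'⟩ := (hnu.1.2.2.2.2 j k hjk).mp ⟨i, hx, hij⟩
    have heq : (k, l) = (k, l') := hlam.1.2.1 (k, l) hkl (k, l') hkl' rfl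
    rw [show l = l' from congrArg Prod.snd heq]
    exact hjl'
  · subst hx' hy'
    obtain ⟨i', hik', hij'⟩ := (hnu.1.2.2.2.2 j k hjk).mpr ⟨l, hkl, hx⟩
    have heq : (i, j) = (i', j) := hlam.1.2.2 (i, j) hij (i', j) hij' rfl
    rw [show i = i' from congrArg Prod.fst heq]
    exact hik'

/-- Unions of tight splices of a nonnesting set partition `λ` are tight splices; hence
there is a maximum tight splice `K` of `λ`, and the tight splices of `λ` are exactly the
sets `λ ⊔ ν` with `ν` a union of rows of `K` (i.e. `ν ⊆ νK` closed under the row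
equivalence of `K`). -/
theorem tight_splices_union_and_maximum (n : ℕ) (lam : Set (Fin n × Fin n))
    (hlam : IsNNSP n lam) :
    (∀ c : Set (Set (Fin n × Fin n)), (∀ nu ∈ c, IsTightSplice n lam nu) →
      IsTightSplice n lam (⋃₀ c)) ∧
    (∃ nuK : Set (Fin n × Fin n), IsTightSplice n lam nuK ∧
      (∀ nu : Set (Fin n × Fin n), IsTightSplice n lam nu → nu ⊆ nuK) ∧
      (∀ nu : Set (Fin n × Fin n), IsTightSplice n lam nu ↔
        (nu ⊆ nuK ∧ ∀ p ∈ nu, ∀ q ∈ nuK,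
          Relation.ReflTransGen (rowRel n lam nuK) p q → q ∈ nu))) := by
  have hunion : ∀ c : Set (Set (Fin n × Fin n)), (∀ nu ∈ c, IsTightSplice n lam nu) →
      IsTightSplice n lam (⋃₀ c) := fun c hc => union_tight n hlam c hc
  refine ⟨hunion, ?_⟩
  have hKtight : IsTightSplice n lam (⋃₀ {nu | IsTightSplice n lam nu}) :=
    hunion _ (fun nu h => h)
  set nuK := ⋃₀ {nu | IsTightSplice n lam nu} with hKdef
  have hmax : ∀ nu : Set (Fin n × Fin n), IsTightSplice n lam nu → nu ⊆ nuK :=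
    fun nu h => Set.subset_sUnion_of_mem h
  refine ⟨nuK, hKtight, hmax, fun nu => ⟨?_, ?_⟩⟩
  · intro hnu
    refine ⟨hmax nu hnu, ?_⟩
    intro p hp q hq hrel
    clear hq
    induction hrel with
    | refl => exact hp
    | tail _ hstep ih => exact row_step n hlam hnu ih hstep
  · rintro ⟨hsub, hclosed⟩
    obtain ⟨⟨hspl, hspK, hdisjK, hS1K, hS2K⟩, htightK⟩ := hKtight
    refine ⟨⟨hspl, ?_, ?_, ?_, ?_⟩, ?_⟩
    · exact ⟨fun p hp => hspK.1 p (hsub hp),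
        fun p hp q hq h => hspK.2.1 p (hsub hp) q (hsub hq) h,
        fun p hp q hq h => hspK.2.2 p (hsub hp) q (hsub hq) h⟩
    · exact hdisjK.mono_right hsub
    · exact fun p hp => hS1K p (hsub hp)
    · intro j k hjk
      constructor
      · rintro ⟨i, hik, hij⟩
        obtain ⟨l, hkl, hjl⟩ := (hS2K j k hjk).mp ⟨i, hsub hik, hij⟩
        exact ⟨l, hkl, hclosed _ hik _ hjl (Relation.ReflTransGen.single
          ⟨(i, j, k, l), ⟨hij, hkl, hsub hik, hjl, hjk⟩, Or.inl ⟨rfl, rfl⟩⟩)⟩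
      · rintro ⟨l, hkl, hjl⟩
        obtain ⟨i, hik, hij⟩ := (hS2K j k hjk).mpr ⟨l, hkl, hsub hjl⟩
        exact ⟨i, hclosed _ hjl _ hik (Relation.ReflTransGen.single
          ⟨(i, j, k, l), ⟨hij, hkl, hik, hsub hjl, hjk⟩, Or.inr ⟨rfl, rfl⟩⟩), hij⟩
    · rw [Set.eq_empty_iff_forall_notMem]
      rintro p ⟨hp1, hp2⟩
      exact Set.eq_empty_iff_forall_notMem.mp htightK p
        ⟨Set.union_subset_union_right lam hsub hp1, hp2⟩

end Paper
end
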